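/- arXiv:0908.3346 — 8 statements merged into one kernel-verified Lean document; each statement's English description precedes it below -/
import Mathlib

section
/- Let n be even, let M ∈ ℂ^{n×n} have a red–black harmonic aliasing pattern with respect to a red–black partition with down-sampling matrices D̄, D̃, with biorthogonal eigenvectors W, V (Vᴴ W = I) and eigen-decomposition M = W · diag(E_L, E_H) · Vᴴ, where E_L and E_H are the diagonal n/2 × n/2 blocks of eigenvalues associated with the L and H eigenvector partitions. Then the mirror matrix M⋆ = (ŪD̄ − ŨD̃) M (ŪD̄ − ŨD̃) satisfies M⋆ = W · diag(E_H, E_L) · Vᴴ; i.e., the mirror is a filter with the L and H eigenvalue blocks swapped. -/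
open Matrix

/-- The red harmonic aliasing pattern `N̄ = (1/2)·[[I, I], [I, I]]`
(blocks of size `n`, acting on a fine grid of `2·n` nodes indexed by `Fin n ⊕ Fin n`). -/
noncomputable def Nbar (n : ℕ) : Matrix (Fin n ⊕ Fin n) (Fin n ⊕ Fin n) ℂ :=
  (1 / 2 : ℂ) • Matrix.fromBlocks 1 1 1 1

/-- The black harmonic aliasing pattern `Ñ = (1/2)·[[I, −I], [−I, I]]`. -/
noncomputable def Ntil (n : ℕ) : Matrix (Fin n ⊕ Fin n) (Fin n ⊕ Fin n) ℂ :=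
  (1 / 2 : ℂ) • Matrix.fromBlocks 1 (-1) (-1) 1

/-- `Dr` and `Db` are the red and black down-sampling matrices of a red–black
partition of the `2·n` fine-grid nodes into two halves: they are `{0,1}`-matrices,
the up-sampling matrices are their transposes, and they satisfy
`D̄Ū = I`, `D̃Ũ = I`, `D̃Ū = 0`, `D̄Ũ = 0` and `ŪD̄ + ŨD̃ = I`. -/
def IsRBPartition {n : ℕ} (Dr Db : Matrix (Fin n) (Fin n ⊕ Fin n) ℂ) : Prop :=
  (∀ i j, Dr i j = 0 ∨ Dr i j = 1) ∧ (∀ i j, Db i j = 0 ∨ Db i j = 1) ∧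
  Dr * Drᵀ = 1 ∧ Db * Dbᵀ = 1 ∧ Db * Drᵀ = 0 ∧ Dr * Dbᵀ = 0 ∧
  Drᵀ * Dr + Dbᵀ * Db = 1

/-- The mirror `M⋆ = (ŪD̄ − ŨD̃) M (ŪD̄ − ŨD̃)` of a matrix with respect to a
red–black partition. -/
noncomputable def mirror {n : ℕ} (Dr Db : Matrix (Fin n) (Fin n ⊕ Fin n) ℂ)
    (M : Matrix (Fin n ⊕ Fin n) (Fin n ⊕ Fin n) ℂ) :
    Matrix (Fin n ⊕ Fin n) (Fin n ⊕ Fin n) ℂ :=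
  (Drᵀ * Dr - Dbᵀ * Db) * M * (Drᵀ * Dr - Dbᵀ * Db)

/-- If `M = W · diag(E_L, E_H) · Vᴴ` has a red–black harmonic aliasing pattern,
then its mirror `M⋆ = (ŪD̄ − ŨD̃) M (ŪD̄ − ŨD̃)` is the filter
`M⋆ = W · diag(E_H, E_L) · Vᴴ` with the eigenvalue blocks swapped. -/
theorem mirror_swaps_eigenvalue_blocks {n : ℕ}
    (Dr Db : Matrix (Fin n) (Fin n ⊕ Fin n) ℂ)
    (hpart : IsRBPartition Dr Db)
    (W V M : Matrix (Fin n ⊕ Fin n) (Fin n ⊕ Fin n) ℂ)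
    (eL eH : Fin n → ℂ)
    (hbi : Vᴴ * W = 1)
    (hred : Vᴴ * (Drᵀ * Dr) * W = Nbar n)
    (hblack : Vᴴ * (Dbᵀ * Db) * W = Ntil n)
    (hM : M = W * Matrix.fromBlocks (diagonal eL) 0 0 (diagonal eH) * Vᴴ) :
    mirror Dr Db M = W * Matrix.fromBlocks (diagonal eH) 0 0 (diagonal eL) * Vᴴ := by
  have hWV : W * Vᴴ = 1 := mul_eq_one_comm.mp hbi
  have key : ∀ A : Matrix (Fin n ⊕ Fin n) (Fin n ⊕ Fin n) ℂ,
      W * (Vᴴ * A * W) * Vᴴ = A := by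
    intro A
    calc W * (Vᴴ * A * W) * Vᴴ = W * Vᴴ * (A * (W * Vᴴ)) := by
          simp only [Matrix.mul_assoc]
      _ = A := by rw [hWV, Matrix.mul_one, Matrix.one_mul]
  have hDr : Drᵀ * Dr = W * Nbar n * Vᴴ := by rw [← hred, key]
  have hDb : Dbᵀ * Db = W * Ntil n * Vᴴ := by rw [← hblack, key]
  have hJ : Nbar n - Ntil n = Matrix.fromBlocks 0 1 1 0 := by
    unfold Nbar Ntil
    rw [← smul_sub]
    ext i j
    rcases i with i | i <;> rcases j with j | j <;>
      simp [Matrix.fromBlocks, Matrix.one_apply] <;> split <;> norm_num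
  have hS : Drᵀ * Dr - Dbᵀ * Db = W * Matrix.fromBlocks 0 1 1 0 * Vᴴ := by
    rw [hDr, hDb, ← hJ, Matrix.mul_sub, Matrix.sub_mul]
  rw [mirror, hS, hM]
  calc (W * Matrix.fromBlocks 0 1 1 0 * Vᴴ) *
        (W * Matrix.fromBlocks (diagonal eL) 0 0 (diagonal eH) * Vᴴ) *
        (W * Matrix.fromBlocks 0 1 1 0 * Vᴴ)
      = W * (Matrix.fromBlocks 0 1 1 0 * ((Vᴴ * W) *
          (Matrix.fromBlocks (diagonal eL) 0 0 (diagonal eH) * ((Vᴴ * W) *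
          (Matrix.fromBlocks 0 1 1 0 * Vᴴ))))) := by
        simp only [Matrix.mul_assoc]
    _ = W * (Matrix.fromBlocks 0 1 1 0 *
          (Matrix.fromBlocks (diagonal eL) 0 0 (diagonal eH) *
          (Matrix.fromBlocks 0 1 1 0 * Vᴴ))) := by
        rw [hbi, Matrix.one_mul, Matrix.one_mul]
    _ = W * Matrix.fromBlocks (diagonal eH) 0 0 (diagonal eL) * Vᴴ := by
        simp only [← Matrix.mul_assoc, Matrix.fromBlocks_multiply]
        simp
end

section
/- In a red–black harmonic two-grid configuration, the red coarse system matrix defined by the Galerkin condition Ā = D̄ F̄_R A F̄_I Ū satisfies Ā = (D̄ W_L) Δ̄ (D̄ V_L)ᴴ, where Δ̄ = Π̄_{R,L} Λ_L Π̄_{I,L} + Π̄_{R,H} Λ_H Π̄_{I,H}. -/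
open Matrix

/-- In a red–black harmonic two-grid configuration, the red Galerkin coarse
system matrix `Ā = D̄ F̄_R A F̄_I Ū` satisfies `Ā = (D̄ W_L) Δ̄ (D̄ V_L)ᴴ` with
`Δ̄ = Π̄_{R,L} Λ_L Π̄_{I,L} + Π̄_{R,H} Λ_H Π̄_{I,H}`. -/
theorem red_coarse_matrix_eq {n : ℕ}
    (Dr Db : Matrix (Fin n) (Fin n ⊕ Fin n) ℂ)
    (hpart : IsRBPartition Dr Db)
    (W V A : Matrix (Fin n ⊕ Fin n) (Fin n ⊕ Fin n) ℂ)
    (lamL lamH : Fin n → ℂ)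
    (hbi : Vᴴ * W = 1)
    (hred : Vᴴ * (Drᵀ * Dr) * W = Nbar n)
    (hblack : Vᴴ * (Dbᵀ * Db) * W = Ntil n)
    (hA : A = W * Matrix.fromBlocks (diagonal lamL) 0 0 (diagonal lamH) * Vᴴ)
    (pRL pRH pIL pIH : Fin n → ℂ)
    (FbarR FbarI : Matrix (Fin n ⊕ Fin n) (Fin n ⊕ Fin n) ℂ)
    (hFbarR : FbarR = W * Matrix.fromBlocks (diagonal pRL) 0 0 (diagonal pRH) * Vᴴ)
    (hFbarI : FbarI = W * Matrix.fromBlocks (diagonal pIL) 0 0 (diagonal pIH) * Vᴴ) :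
    Dr * FbarR * A * FbarI * Drᵀ =
      (Dr * W.submatrix id Sum.inl) *
        (diagonal pRL * diagonal lamL * diagonal pIL +
          diagonal pRH * diagonal lamH * diagonal pIH) *
        (Dr * V.submatrix id Sum.inl)ᴴ := by
  obtain ⟨h01, -, hDrDrT, -, -, -, -⟩ := hpart
  have hDrH : Drᴴ = Drᵀ := by
    ext i j
    rcases h01 j i with h | h <;>
      simp [Matrix.conjTranspose_apply, Matrix.transpose_apply, h]
  set WL := W.submatrix id Sum.inl with hWL
  set WH := W.submatrix id Sum.inr with hWH
  set VL := V.submatrix id Sum.inl with hVL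
  set VH := V.submatrix id Sum.inr with hVH
  have hWcols : W = fromCols WL WH := by
    ext i (j | j) <;> rfl
  have hVrows : Vᴴ = fromRows VLᴴ VHᴴ := by
    ext (i | i) j <;> rfl
  have hWV : W * Vᴴ = 1 := mul_eq_one_comm.mp hbi
  have key1 : Dr * WH = Dr * WL := by
    have h1 : Vᴴ * (Drᵀ * Dr) * W * fromRows (1 : Matrix (Fin n) (Fin n) ℂ) (-1 : Matrix (Fin n) (Fin n) ℂ) = 0 := by
      rw [hred, Nbar, Matrix.smul_mul, Matrix.fromBlocks_mul_fromRows]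
      simp
    have h2 : W * fromRows (1 : Matrix (Fin n) (Fin n) ℂ) (-1 : Matrix (Fin n) (Fin n) ℂ) = WL - WH := by
      rw [hWcols, Matrix.fromCols_mul_fromRows]
      simp [sub_eq_add_neg]
    have h3 : Vᴴ * ((Drᵀ * Dr) * (WL - WH)) = 0 := by
      rw [← h2]
      simp only [← Matrix.mul_assoc] at h1 ⊢
      exact h1
    have h4 : (Drᵀ * Dr) * (WL - WH) = 0 := by
      have h5 : W * (Vᴴ * ((Drᵀ * Dr) * (WL - WH))) = 0 := by rw [h3, Matrix.mul_zero]
      rwa [← Matrix.mul_assoc, hWV, Matrix.one_mul] at h5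
    have h6 : Dr * (WL - WH) = 0 := by
      calc Dr * (WL - WH) = (Dr * Drᵀ) * (Dr * (WL - WH)) := by rw [hDrDrT, Matrix.one_mul]
        _ = Dr * ((Drᵀ * Dr) * (WL - WH)) := by
            rw [← Matrix.mul_assoc, ← Matrix.mul_assoc, Matrix.mul_assoc Dr Drᵀ Dr]
        _ = 0 := by rw [h4, Matrix.mul_zero]
    rw [Matrix.mul_sub, sub_eq_zero] at h6
    exact h6.symm
  have key2 : VHᴴ * Drᵀ = VLᴴ * Drᵀ := by
    have h1 : fromCols (1 : Matrix (Fin n) (Fin n) ℂ) (-1 : Matrix (Fin n) (Fin n) ℂ) * (Vᴴ * (Drᵀ * Dr) * W) = 0 := by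
      rw [hred, Nbar, Matrix.mul_smul, Matrix.fromCols_mul_fromBlocks]
      simp
    have h2 : fromCols (1 : Matrix (Fin n) (Fin n) ℂ) (-1 : Matrix (Fin n) (Fin n) ℂ) * Vᴴ = VLᴴ - VHᴴ := by
      rw [hVrows, Matrix.fromCols_mul_fromRows]
      simp [sub_eq_add_neg]
    have h3 : (VLᴴ - VHᴴ) * (Drᵀ * Dr) * W = 0 := by
      rw [← h2]
      simp only [← Matrix.mul_assoc] at h1 ⊢
      exact h1
    have h4 : (VLᴴ - VHᴴ) * (Drᵀ * Dr) = 0 := by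
      have h5 : (VLᴴ - VHᴴ) * (Drᵀ * Dr) * W * Vᴴ = 0 := by rw [h3, Matrix.zero_mul]
      rwa [Matrix.mul_assoc ((VLᴴ - VHᴴ) * (Drᵀ * Dr)), hWV, Matrix.mul_one] at h5
    have h6 : (VLᴴ - VHᴴ) * Drᵀ = 0 := by
      calc (VLᴴ - VHᴴ) * Drᵀ = (VLᴴ - VHᴴ) * Drᵀ * (Dr * Drᵀ) := by
            rw [hDrDrT, Matrix.mul_one]
        _ = (VLᴴ - VHᴴ) * (Drᵀ * Dr) * Drᵀ := by
            rw [Matrix.mul_assoc, Matrix.mul_assoc, ← Matrix.mul_assoc Drᵀ]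
        _ = 0 := by rw [h4, Matrix.zero_mul]
    rw [Matrix.sub_mul, sub_eq_zero] at h6
    exact h6.symm
  set X := diagonal pRL * diagonal lamL * diagonal pIL with hX
  set Y := diagonal pRH * diagonal lamH * diagonal pIH with hY
  have hcore : FbarR * A * FbarI = W * Matrix.fromBlocks X 0 0 Y * Vᴴ := by
    rw [hFbarR, hA, hFbarI]
    have collapse : ∀ (M N : Matrix (Fin n ⊕ Fin n) (Fin n ⊕ Fin n) ℂ),
        W * M * Vᴴ * (W * N * Vᴴ) = W * (M * N) * Vᴴ := by
      intro M N
      calc W * M * Vᴴ * (W * N * Vᴴ) = W * M * (Vᴴ * W) * N * Vᴴ := by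
            simp only [Matrix.mul_assoc]
        _ = W * (M * N) * Vᴴ := by rw [hbi]; simp only [Matrix.mul_one, Matrix.mul_assoc]
    rw [collapse, collapse]
    congr 2
    simp [Matrix.fromBlocks_multiply, hX, hY, Matrix.mul_assoc]
  have hexp : Dr * FbarR * A * FbarI * Drᵀ
      = Dr * WL * X * (VLᴴ * Drᵀ) + Dr * WH * Y * (VHᴴ * Drᵀ) := by
    have : Dr * FbarR * A * FbarI = Dr * (FbarR * A * FbarI) := by
      simp only [Matrix.mul_assoc]
    rw [this, hcore]
    rw [hWcols, hVrows, Matrix.fromCols_mul_fromBlocks]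
    simp only [Matrix.mul_zero, Matrix.zero_mul, add_zero, zero_add]
    rw [Matrix.fromCols_mul_fromRows]
    rw [Matrix.mul_add, Matrix.add_mul]
    simp only [Matrix.mul_assoc]
  rw [hexp, key1, key2]
  rw [Matrix.conjTranspose_mul, hDrH]
  simp only [Matrix.add_mul, Matrix.mul_add, Matrix.mul_assoc]
end

section
/- In a red–black harmonic two-grid configuration, suppose Δ̄ = Π̄_{R,L} Λ_L Π̄_{I,L} + Π̄_{R,H} Λ_H Π̄_{I,H} is invertible. Then the red coarse system matrix Ā = D̄ F̄_R A F̄_I Ū is invertible with inverse Ā⁻¹ = 4 (D̄ W_L) Δ̄⁻¹ (D̄ V_L)ᴴ. -/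
open Matrix

set_option maxHeartbeats 1600000 in
/-- In a red–black harmonic two-grid configuration with
`Δ̄ = Π̄_{R,L} Λ_L Π̄_{I,L} + Π̄_{R,H} Λ_H Π̄_{I,H}` invertible, the red Galerkin
coarse matrix `Ā = D̄ F̄_R A F̄_I Ū` is invertible with
`Ā⁻¹ = 4 (D̄ W_L) Δ̄⁻¹ (D̄ V_L)ᴴ`. -/
theorem red_coarse_matrix_inverse {n : ℕ}
    (Dr Db : Matrix (Fin n) (Fin n ⊕ Fin n) ℂ)
    (hpart : IsRBPartition Dr Db)
    (W V A : Matrix (Fin n ⊕ Fin n) (Fin n ⊕ Fin n) ℂ)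
    (lamL lamH : Fin n → ℂ)
    (hbi : Vᴴ * W = 1)
    (hred : Vᴴ * (Drᵀ * Dr) * W = Nbar n)
    (hblack : Vᴴ * (Dbᵀ * Db) * W = Ntil n)
    (hA : A = W * Matrix.fromBlocks (diagonal lamL) 0 0 (diagonal lamH) * Vᴴ)
    (pRL pRH pIL pIH : Fin n → ℂ)
    (FbarR FbarI : Matrix (Fin n ⊕ Fin n) (Fin n ⊕ Fin n) ℂ)
    (hFbarR : FbarR = W * Matrix.fromBlocks (diagonal pRL) 0 0 (diagonal pRH) * Vᴴ)
    (hFbarI : FbarI = W * Matrix.fromBlocks (diagonal pIL) 0 0 (diagonal pIH) * Vᴴ)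
    (Δbar : Matrix (Fin n) (Fin n) ℂ)
    (hΔdef : Δbar = diagonal pRL * diagonal lamL * diagonal pIL +
        diagonal pRH * diagonal lamH * diagonal pIH)
    (hΔ : IsUnit Δbar) :
    IsUnit (Dr * FbarR * A * FbarI * Drᵀ) ∧
    (Dr * FbarR * A * FbarI * Drᵀ)⁻¹ =
      (4 : ℂ) • ((Dr * W.submatrix id Sum.inl) * Δbar⁻¹ *
        (Dr * V.submatrix id Sum.inl)ᴴ) := by
  obtain ⟨hDr01, hDb01, hDrDr, hDbDb, hDbDr, hDrDb, hsum⟩ := hpart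
  have hWV : W * Vᴴ = 1 := mul_eq_one_comm.mp hbi
  have hDrH : Drᴴ = Drᵀ := by
    ext i j
    rcases hDr01 j i with h | h <;>
      simp [Matrix.conjTranspose_apply, Matrix.transpose_apply, h]
  set XL : Matrix (Fin n) (Fin n) ℂ := Dr * W.submatrix id Sum.inl with hXLdef
  set R : Matrix (Fin n) (Fin n) ℂ := (Dr * V.submatrix id Sum.inl)ᴴ with hRdef
  have hVWx : ∀ x : Matrix (Fin n ⊕ Fin n) (Fin n ⊕ Fin n) ℂ, Vᴴ * (W * x) = x := by
    intro x; rw [← Matrix.mul_assoc, hbi, Matrix.one_mul]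
  have hVWy : ∀ x : Matrix (Fin n ⊕ Fin n) (Fin n) ℂ, Vᴴ * (W * x) = x := by
    intro x; rw [← Matrix.mul_assoc, hbi, Matrix.one_mul]
  have hWVx : ∀ x : Matrix (Fin n ⊕ Fin n) (Fin n ⊕ Fin n) ℂ, W * (Vᴴ * x) = x := by
    intro x; rw [← Matrix.mul_assoc, hWV, Matrix.one_mul]
  -- X := Dr * W satisfies X = X * Nbar
  have hXN : Dr * W = Dr * W * Nbar n := by
    have h1 : Drᵀ * (Dr * W) = W * Nbar n := by
      calc Drᵀ * (Dr * W) = W * (Vᴴ * (Drᵀ * Dr) * W) := by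
            simp only [Matrix.mul_assoc, hWVx]
        _ = W * Nbar n := by rw [hred]
    calc Dr * W = Dr * Drᵀ * (Dr * W) := by rw [hDrDr, Matrix.one_mul]
      _ = Dr * (Drᵀ * (Dr * W)) := by rw [Matrix.mul_assoc]
      _ = Dr * (W * Nbar n) := by rw [h1]
      _ = Dr * W * Nbar n := by rw [Matrix.mul_assoc]
  -- Z := Vᴴ * Drᵀ satisfies Z = Nbar * Z
  have hZN : Vᴴ * Drᵀ = Nbar n * (Vᴴ * Drᵀ) := by
    have h1 : Vᴴ * Drᵀ * Dr = Nbar n * Vᴴ := by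
      calc Vᴴ * Drᵀ * Dr = Vᴴ * (Drᵀ * Dr) * W * Vᴴ := by
            rw [Matrix.mul_assoc (Vᴴ * (Drᵀ * Dr)), hWV, Matrix.mul_one, Matrix.mul_assoc]
        _ = Nbar n * Vᴴ := by rw [hred]
    calc Vᴴ * Drᵀ = Vᴴ * Drᵀ * (Dr * Drᵀ) := by rw [hDrDr, Matrix.mul_one]
      _ = Vᴴ * Drᵀ * Dr * Drᵀ := by simp only [Matrix.mul_assoc]
      _ = Nbar n * Vᴴ * Drᵀ := by rw [h1]
      _ = Nbar n * (Vᴴ * Drᵀ) := by rw [Matrix.mul_assoc]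
  -- column decomposition of Dr * W
  have hXcols : Dr * W = fromCols XL XL := by
    have hexp : ∀ M : Matrix (Fin n) (Fin n ⊕ Fin n) ℂ,
        M * Nbar n = fromCols ((1/2 : ℂ) • (M.toCols₁ + M.toCols₂))
          ((1/2 : ℂ) • (M.toCols₁ + M.toCols₂)) := by
      intro M
      have hM : M = fromCols M.toCols₁ M.toCols₂ := (fromCols_toCols M).symm
      rw [Nbar, Matrix.mul_smul]
      nth_rewrite 1 [hM]
      rw [fromCols_mul_fromBlocks]
      ext i (j | j) <;> simp [smul_add, mul_add]
    have hc1 := congrArg Matrix.toCols₁ hXN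
    have hc2 := congrArg Matrix.toCols₂ hXN
    rw [hexp, toCols₁_fromCols] at hc1
    rw [hexp, toCols₂_fromCols] at hc2
    have hXL1 : XL = (Dr * W).toCols₁ := by
      ext i j
      simp [hXLdef, Matrix.mul_apply, Matrix.toCols₁]
    have h12 : (Dr * W).toCols₁ = (Dr * W).toCols₂ := hc1.trans hc2.symm
    conv_lhs => rw [← fromCols_toCols (Dr * W)]
    rw [hXL1, ← h12]
  -- row decomposition of Vᴴ * Drᵀ
  have hRrow : R = (Vᴴ * Drᵀ).toRows₁ := by
    rw [hRdef, Matrix.conjTranspose_mul, hDrH]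
    ext i j
    simp [Matrix.mul_apply, Matrix.toRows₁, Matrix.conjTranspose_apply]
  have hZrows : Vᴴ * Drᵀ = fromRows R R := by
    have hexp : ∀ M : Matrix (Fin n ⊕ Fin n) (Fin n) ℂ,
        Nbar n * M = fromRows ((1/2 : ℂ) • (M.toRows₁ + M.toRows₂))
          ((1/2 : ℂ) • (M.toRows₁ + M.toRows₂)) := by
      intro M
      have hM : M = fromRows M.toRows₁ M.toRows₂ := (fromRows_toRows M).symm
      rw [Nbar, Matrix.smul_mul]
      nth_rewrite 1 [hM]
      rw [fromBlocks_mul_fromRows]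
      ext (i | i) j <;> simp [smul_add, mul_add]
    have hc1 := congrArg Matrix.toRows₁ hZN
    have hc2 := congrArg Matrix.toRows₂ hZN
    rw [hexp, toRows₁_fromRows] at hc1
    rw [hexp, toRows₂_fromRows] at hc2
    have h12 : (Vᴴ * Drᵀ).toRows₁ = (Vᴴ * Drᵀ).toRows₂ := hc1.trans hc2.symm
    conv_lhs => rw [← fromRows_toRows (Vᴴ * Drᵀ)]
    rw [← hRrow, ← h12, ← hRrow]
  -- R * XL = (1/2) • 1
  have hRXL : R * XL = (1/2 : ℂ) • 1 := by
    have h1 : Vᴴ * (Drᵀ * Dr) * W = (Vᴴ * Drᵀ) * (Dr * W) := by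
      simp only [Matrix.mul_assoc]
    have h2 := hred
    rw [h1, hZrows, hXcols, fromRows_mul_fromCols] at h2
    have := congrArg Matrix.toBlocks₁₁ h2
    simp [Nbar, Matrix.toBlocks₁₁, Matrix.fromBlocks] at this
    ext i j
    simpa using congrFun (congrFun this i) j
  -- XL * R = (1/2) • 1
  have hXLR : XL * R = (1/2 : ℂ) • 1 := by
    have h1 : (Dr * W) * (Vᴴ * Drᵀ) = 1 := by
      calc (Dr * W) * (Vᴴ * Drᵀ) = Dr * (W * Vᴴ) * Drᵀ := by
            simp only [Matrix.mul_assoc]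
        _ = 1 := by rw [hWV, Matrix.mul_one, hDrDr]
    rw [hXcols, hZrows, fromCols_mul_fromRows] at h1
    have h2 : (2 : ℂ) • (XL * R) = 1 := by rw [two_smul]; exact h1
    calc XL * R = (1/2 : ℂ) • ((2 : ℂ) • (XL * R)) := by
          rw [smul_smul]; norm_num
      _ = (1/2 : ℂ) • (1 : Matrix (Fin n) (Fin n) ℂ) := by rw [h2]
  -- the coarse matrix
  set ML : Matrix (Fin n) (Fin n) ℂ := diagonal pRL * diagonal lamL * diagonal pIL with hML
  set MH : Matrix (Fin n) (Fin n) ℂ := diagonal pRH * diagonal lamH * diagonal pIH with hMH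
  have hAbar : Dr * FbarR * A * FbarI * Drᵀ = XL * Δbar * R := by
    have hmid : FbarR * (A * (FbarI * Drᵀ)) =
        W * (Matrix.fromBlocks ML 0 0 MH * (Vᴴ * Drᵀ)) := by
      have hprod : ∀ x : Matrix (Fin n ⊕ Fin n) (Fin n) ℂ,
          Matrix.fromBlocks (diagonal pRL) 0 0 (diagonal pRH) *
            (Matrix.fromBlocks (diagonal lamL) 0 0 (diagonal lamH) *
              (Matrix.fromBlocks (diagonal pIL) 0 0 (diagonal pIH) * x)) =
          Matrix.fromBlocks ML 0 0 MH * x := by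
        intro x
        rw [← Matrix.mul_assoc, ← Matrix.mul_assoc]
        congr 1
        simp [Matrix.fromBlocks_multiply, hML, hMH]
      subst hFbarR hA hFbarI
      simp only [Matrix.mul_assoc]
      rw [hVWy, hVWy, hprod]
    calc Dr * FbarR * A * FbarI * Drᵀ
        = Dr * (FbarR * (A * (FbarI * Drᵀ))) := by simp only [Matrix.mul_assoc]
      _ = Dr * (W * (Matrix.fromBlocks ML 0 0 MH * (Vᴴ * Drᵀ))) := by rw [hmid]
      _ = (Dr * W) * Matrix.fromBlocks ML 0 0 MH * (Vᴴ * Drᵀ) := by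
          simp only [Matrix.mul_assoc]
      _ = XL * Δbar * R := by
          rw [hXcols, hZrows, fromCols_mul_fromBlocks]
          simp only [Matrix.mul_zero, Matrix.zero_mul, add_zero, zero_add]
          rw [fromCols_mul_fromRows, hΔdef]
          simp [Matrix.mul_add, Matrix.add_mul]
  -- Δbar inverse facts
  have hΔdet : IsUnit Δbar.det := (Matrix.isUnit_iff_isUnit_det Δbar).mp hΔ
  have hΔr : Δbar * Δbar⁻¹ = 1 := Matrix.mul_nonsing_inv Δbar hΔdet
  have hΔl : Δbar⁻¹ * Δbar = 1 := Matrix.nonsing_inv_mul Δbar hΔdet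
  set B : Matrix (Fin n) (Fin n) ℂ := (4 : ℂ) • (XL * Δbar⁻¹ * R) with hB
  have hAB : (XL * Δbar * R) * B = 1 := by
    rw [hB, Matrix.mul_smul]
    have h1 : XL * Δbar * R * (XL * Δbar⁻¹ * R) = XL * Δbar * (R * XL) * (Δbar⁻¹ * R) := by
      simp only [Matrix.mul_assoc]
    rw [h1, hRXL, Matrix.mul_smul, Matrix.mul_one, Matrix.smul_mul]
    have h2 : XL * Δbar * (Δbar⁻¹ * R) = XL * R := by
      rw [Matrix.mul_assoc XL, ← Matrix.mul_assoc Δbar, hΔr, Matrix.one_mul]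
    rw [h2, hXLR, smul_smul, smul_smul]
    norm_num
  have hBA : B * (XL * Δbar * R) = 1 := by
    rw [hB, Matrix.smul_mul]
    have h1 : XL * Δbar⁻¹ * R * (XL * Δbar * R) = XL * Δbar⁻¹ * (R * XL) * (Δbar * R) := by
      simp only [Matrix.mul_assoc]
    rw [h1, hRXL, Matrix.mul_smul, Matrix.mul_one, Matrix.smul_mul]
    have h2 : XL * Δbar⁻¹ * (Δbar * R) = XL * R := by
      rw [Matrix.mul_assoc XL, ← Matrix.mul_assoc Δbar⁻¹, hΔl, Matrix.one_mul]
    rw [h2, hXLR, smul_smul, smul_smul]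
    norm_num
  have hAB' : (Dr * FbarR * A * FbarI * Drᵀ) * B = 1 := by rw [hAbar]; exact hAB
  have hBA' : B * (Dr * FbarR * A * FbarI * Drᵀ) = 1 := by rw [hAbar]; exact hBA
  refine ⟨⟨⟨Dr * FbarR * A * FbarI * Drᵀ, B, hAB', hBA'⟩, rfl⟩, ?_⟩
  exact Matrix.inv_eq_right_inv hAB'
end

section
/- In a red–black harmonic two-grid configuration, suppose Δ̃ = Π̃_{R,L} Λ_L Π̃_{I,L} + Π̃_{R,H} Λ_H Π̃_{I,H} is invertible. Then the black coarse system matrix Ã = D̃ F̃_R A F̃_I Ũ is invertible with inverse Ã⁻¹ = 4 (D̃ W_L) Δ̃⁻¹ (D̃ V_L)ᴴ. -/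
open Matrix

lemma Ntil_conjTranspose (n : ℕ) : (Ntil n)ᴴ = Ntil n := by
  simp [Ntil, fromBlocks_conjTranspose]

lemma blockR {n : ℕ} (Da Dbb D : Matrix (Fin n) (Fin n) ℂ) (h : (Da + Dbb) * D = 1) :
    Ntil n * fromBlocks Da 0 0 Dbb * Ntil n * fromBlocks D 0 0 0 * Ntil n
      = (1/4 : ℂ) • Ntil n := by
  have key : (fromBlocks 1 (-1) (-1) 1 : Matrix (Fin n ⊕ Fin n) (Fin n ⊕ Fin n) ℂ)
      * fromBlocks Da 0 0 Dbb * fromBlocks 1 (-1) (-1) 1 * fromBlocks D 0 0 0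
      * fromBlocks 1 (-1) (-1) 1 = fromBlocks 1 (-1) (-1) 1 := by
    simp only [fromBlocks_multiply, Matrix.one_mul, Matrix.mul_one, Matrix.zero_mul,
      Matrix.mul_zero, add_zero, zero_add, Matrix.neg_mul, Matrix.mul_neg, neg_neg,
      neg_zero, neg_add_rev]
    rw [show -Da + -Dbb = -(Da + Dbb) by abel]
    simp only [Matrix.neg_mul, h, neg_neg]
  simp only [Ntil, Matrix.smul_mul, Matrix.mul_smul, smul_smul, key]
  norm_num

lemma blockL {n : ℕ} (Da Dbb D : Matrix (Fin n) (Fin n) ℂ) (h : D * (Da + Dbb) = 1) :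
    Ntil n * fromBlocks D 0 0 0 * Ntil n * fromBlocks Da 0 0 Dbb * Ntil n
      = (1/4 : ℂ) • Ntil n := by
  have key : (fromBlocks 1 (-1) (-1) 1 : Matrix (Fin n ⊕ Fin n) (Fin n ⊕ Fin n) ℂ)
      * fromBlocks D 0 0 0 * fromBlocks 1 (-1) (-1) 1 * fromBlocks Da 0 0 Dbb
      * fromBlocks 1 (-1) (-1) 1 = fromBlocks 1 (-1) (-1) 1 := by
    simp only [fromBlocks_multiply, Matrix.one_mul, Matrix.mul_one, Matrix.zero_mul,
      Matrix.mul_zero, add_zero, zero_add, Matrix.neg_mul, Matrix.mul_neg, neg_neg,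
      neg_zero, neg_add_rev, Matrix.mul_add, Matrix.add_mul]
    rw [show D * Da + D * Dbb = 1 by rw [← Matrix.mul_add, h]]
    rw [← neg_add, ← Matrix.mul_add, h]
  simp only [Ntil, Matrix.smul_mul, Matrix.mul_smul, smul_smul, key]
  norm_num

lemma submatrix_sandwich {n : ℕ} (W V : Matrix (Fin n ⊕ Fin n) (Fin n ⊕ Fin n) ℂ)
    (B : Matrix (Fin n) (Fin n) ℂ) :
    W.submatrix id Sum.inl * B * (V.submatrix id Sum.inl)ᴴ
      = W * fromBlocks B 0 0 0 * Vᴴ := by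
  ext i j
  simp [mul_apply, Fintype.sum_sum_type, conjTranspose_apply, Finset.sum_mul, Finset.mul_sum]

/-- In a red–black harmonic two-grid configuration with
`Δ̃ = Π̃_{R,L} Λ_L Π̃_{I,L} + Π̃_{R,H} Λ_H Π̃_{I,H}` invertible, the black Galerkin
coarse matrix `Ã = D̃ F̃_R A F̃_I Ũ` is invertible with
`Ã⁻¹ = 4 (D̃ W_L) Δ̃⁻¹ (D̃ V_L)ᴴ`. -/
theorem black_coarse_matrix_inverse {n : ℕ}
    (Dr Db : Matrix (Fin n) (Fin n ⊕ Fin n) ℂ)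
    (hpart : IsRBPartition Dr Db)
    (W V A : Matrix (Fin n ⊕ Fin n) (Fin n ⊕ Fin n) ℂ)
    (lamL lamH : Fin n → ℂ)
    (hbi : Vᴴ * W = 1)
    (hred : Vᴴ * (Drᵀ * Dr) * W = Nbar n)
    (hblack : Vᴴ * (Dbᵀ * Db) * W = Ntil n)
    (hA : A = W * Matrix.fromBlocks (diagonal lamL) 0 0 (diagonal lamH) * Vᴴ)
    (qRL qRH qIL qIH : Fin n → ℂ)
    (FtilR FtilI : Matrix (Fin n ⊕ Fin n) (Fin n ⊕ Fin n) ℂ)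
    (hFtilR : FtilR = W * Matrix.fromBlocks (diagonal qRL) 0 0 (diagonal qRH) * Vᴴ)
    (hFtilI : FtilI = W * Matrix.fromBlocks (diagonal qIL) 0 0 (diagonal qIH) * Vᴴ)
    (Δtil : Matrix (Fin n) (Fin n) ℂ)
    (hΔdef : Δtil = diagonal qRL * diagonal lamL * diagonal qIL +
        diagonal qRH * diagonal lamH * diagonal qIH)
    (hΔ : IsUnit Δtil) :
    IsUnit (Db * FtilR * A * FtilI * Dbᵀ) ∧
    (Db * FtilR * A * FtilI * Dbᵀ)⁻¹ =
      (4 : ℂ) • ((Db * W.submatrix id Sum.inl) * Δtil⁻¹ *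
        (Db * V.submatrix id Sum.inl)ᴴ) := by
  obtain ⟨h01r, h01b, hrr, hbb, hbr, hrb, hsum⟩ := hpart
  set Ea := diagonal qRL * diagonal lamL * diagonal qIL with hEa
  set Eb := diagonal qRH * diagonal lamH * diagonal qIH with hEb
  -- basic biorthogonality consequences
  have hWV : W * Vᴴ = 1 := mul_eq_one_comm.mp hbi
  have hbi' : Wᴴ * V = 1 := by
    have h := congrArg conjTranspose hbi
    simpa [conjTranspose_mul] using h
  have hVW : V * Wᴴ = 1 := mul_eq_one_comm.mp hbi'
  -- Db is real
  have hDbH : Dbᴴ = Dbᵀ := by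
    ext i j
    rcases h01b j i with h | h <;> simp [conjTranspose_apply, h]
  have hDbTH : (Dbᵀ)ᴴ = Db := by
    ext i j
    rcases h01b i j with h | h <;> simp [conjTranspose_apply, h]
  have hKH : (Dbᵀ * Db)ᴴ = Dbᵀ * Db := by
    rw [conjTranspose_mul, hDbH, hDbTH]
  -- Ntil absorption on the W side
  have hKW : Dbᵀ * (Db * W) = W * Ntil n := by
    calc Dbᵀ * (Db * W) = (W * Vᴴ) * (Dbᵀ * (Db * W)) := by rw [hWV, Matrix.one_mul]
      _ = W * (Vᴴ * (Dbᵀ * Db) * W) := by simp only [Matrix.mul_assoc]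
      _ = W * Ntil n := by rw [hblack]
  have key1 : Db * W * Ntil n = Db * W := by
    calc Db * W * Ntil n = Db * (W * Ntil n) := by rw [Matrix.mul_assoc]
      _ = Db * (Dbᵀ * (Db * W)) := by rw [hKW]
      _ = (Db * Dbᵀ) * (Db * W) := by simp only [Matrix.mul_assoc]
      _ = Db * W := by rw [hbb, Matrix.one_mul]
  -- Ntil absorption on the V side
  have hblack' : Wᴴ * (Dbᵀ * Db) * V = Ntil n := by
    have h := congrArg conjTranspose hblack
    simpa [conjTranspose_mul, hDbH, hDbTH, Ntil_conjTranspose, Matrix.mul_assoc] using h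
  have hKV : Dbᵀ * (Db * V) = V * Ntil n := by
    calc Dbᵀ * (Db * V) = (V * Wᴴ) * (Dbᵀ * (Db * V)) := by rw [hVW, Matrix.one_mul]
      _ = V * (Wᴴ * (Dbᵀ * Db) * V) := by simp only [Matrix.mul_assoc]
      _ = V * Ntil n := by rw [hblack']
  have key2a : Db * V * Ntil n = Db * V := by
    calc Db * V * Ntil n = Db * (V * Ntil n) := by rw [Matrix.mul_assoc]
      _ = Db * (Dbᵀ * (Db * V)) := by rw [hKV]
      _ = (Db * Dbᵀ) * (Db * V) := by simp only [Matrix.mul_assoc]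
      _ = Db * V := by rw [hbb, Matrix.one_mul]
  have key2 : Ntil n * (Vᴴ * Dbᵀ) = Vᴴ * Dbᵀ := by
    have h := congrArg conjTranspose key2a
    simpa [conjTranspose_mul, Ntil_conjTranspose, hDbH, Matrix.mul_assoc] using h
  -- the coarse matrix in symbol form
  have hcol : ∀ P Q : Matrix (Fin n ⊕ Fin n) (Fin n ⊕ Fin n) ℂ,
      (W * P * Vᴴ) * (W * Q * Vᴴ) = W * (P * Q) * Vᴴ := by
    intro P Q
    calc (W * P * Vᴴ) * (W * Q * Vᴴ) = W * P * (Vᴴ * W) * (Q * Vᴴ) := by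
          simp only [Matrix.mul_assoc]
      _ = W * (P * Q) * Vᴴ := by rw [hbi]; simp only [Matrix.mul_one, Matrix.mul_assoc]
  have hM : (fromBlocks (diagonal qRL) 0 0 (diagonal qRH) : Matrix _ _ ℂ)
      * fromBlocks (diagonal lamL) 0 0 (diagonal lamH)
      * fromBlocks (diagonal qIL) 0 0 (diagonal qIH) = fromBlocks Ea 0 0 Eb := by
    simp [fromBlocks_multiply, hEa, hEb]
  have hAtil : Db * FtilR * A * FtilI * Dbᵀ
      = Db * (W * fromBlocks Ea 0 0 Eb * Vᴴ) * Dbᵀ := by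
    have hm : FtilR * A * FtilI = W * fromBlocks Ea 0 0 Eb * Vᴴ := by
      rw [hFtilR, hA, hFtilI, hcol, hcol, hM]
    calc Db * FtilR * A * FtilI * Dbᵀ = Db * (FtilR * A * FtilI) * Dbᵀ := by
          simp only [Matrix.mul_assoc]
      _ = Db * (W * fromBlocks Ea 0 0 Eb * Vᴴ) * Dbᵀ := by rw [hm]
  -- inverse of Δtil
  have hdet : IsUnit Δtil.det := (isUnit_iff_isUnit_det Δtil).mp hΔ
  have hER : (Ea + Eb) * Δtil⁻¹ = 1 := by rw [← hΔdef]; exact mul_nonsing_inv _ hdet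
  have hEL : Δtil⁻¹ * (Ea + Eb) = 1 := by rw [← hΔdef]; exact nonsing_inv_mul _ hdet
  -- the candidate inverse in sandwich form
  have hXeq : (4 : ℂ) • ((Db * W.submatrix id Sum.inl) * Δtil⁻¹ *
        (Db * V.submatrix id Sum.inl)ᴴ)
      = (4 : ℂ) • (Db * (W * fromBlocks Δtil⁻¹ 0 0 0 * Vᴴ) * Dbᵀ) := by
    congr 1
    calc (Db * W.submatrix id Sum.inl) * Δtil⁻¹ * (Db * V.submatrix id Sum.inl)ᴴ
        = Db * (W.submatrix id Sum.inl * Δtil⁻¹ * (V.submatrix id Sum.inl)ᴴ) * Dbᵀ := by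
          rw [conjTranspose_mul, hDbH]; simp only [Matrix.mul_assoc]
      _ = Db * (W * fromBlocks Δtil⁻¹ 0 0 0 * Vᴴ) * Dbᵀ := by rw [submatrix_sandwich]
  -- core computations
  have chainR : Db * W * (fromBlocks Ea 0 0 Eb * Ntil n * fromBlocks Δtil⁻¹ 0 0 0)
      * (Vᴴ * Dbᵀ) = (1/4 : ℂ) • (1 : Matrix (Fin n) (Fin n) ℂ) := by
    calc Db * W * (fromBlocks Ea 0 0 Eb * Ntil n * fromBlocks Δtil⁻¹ 0 0 0) * (Vᴴ * Dbᵀ)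
        = (Db * W * Ntil n) * (fromBlocks Ea 0 0 Eb * Ntil n * fromBlocks Δtil⁻¹ 0 0 0)
            * (Ntil n * (Vᴴ * Dbᵀ)) := by rw [key1, key2]
      _ = Db * W * (Ntil n * fromBlocks Ea 0 0 Eb * Ntil n * fromBlocks Δtil⁻¹ 0 0 0
            * Ntil n) * (Vᴴ * Dbᵀ) := by simp only [Matrix.mul_assoc]
      _ = Db * W * ((1/4 : ℂ) • Ntil n) * (Vᴴ * Dbᵀ) := by rw [blockR Ea Eb Δtil⁻¹ hER]
      _ = (1/4 : ℂ) • (Db * W * (Ntil n * (Vᴴ * Dbᵀ))) := by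
          simp only [Matrix.mul_smul, Matrix.smul_mul, Matrix.mul_assoc]
      _ = (1/4 : ℂ) • (Db * (W * Vᴴ) * Dbᵀ) := by rw [key2]; simp only [Matrix.mul_assoc]
      _ = (1/4 : ℂ) • (1 : Matrix (Fin n) (Fin n) ℂ) := by
          rw [hWV, Matrix.mul_one, hbb]
  have chainL : Db * W * (fromBlocks Δtil⁻¹ 0 0 0 * Ntil n * fromBlocks Ea 0 0 Eb)
      * (Vᴴ * Dbᵀ) = (1/4 : ℂ) • (1 : Matrix (Fin n) (Fin n) ℂ) := by
    calc Db * W * (fromBlocks Δtil⁻¹ 0 0 0 * Ntil n * fromBlocks Ea 0 0 Eb) * (Vᴴ * Dbᵀ)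
        = (Db * W * Ntil n) * (fromBlocks Δtil⁻¹ 0 0 0 * Ntil n * fromBlocks Ea 0 0 Eb)
            * (Ntil n * (Vᴴ * Dbᵀ)) := by rw [key1, key2]
      _ = Db * W * (Ntil n * fromBlocks Δtil⁻¹ 0 0 0 * Ntil n * fromBlocks Ea 0 0 Eb
            * Ntil n) * (Vᴴ * Dbᵀ) := by simp only [Matrix.mul_assoc]
      _ = Db * W * ((1/4 : ℂ) • Ntil n) * (Vᴴ * Dbᵀ) := by rw [blockL Ea Eb Δtil⁻¹ hEL]
      _ = (1/4 : ℂ) • (Db * W * (Ntil n * (Vᴴ * Dbᵀ))) := by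
          simp only [Matrix.mul_smul, Matrix.smul_mul, Matrix.mul_assoc]
      _ = (1/4 : ℂ) • (Db * (W * Vᴴ) * Dbᵀ) := by rw [key2]; simp only [Matrix.mul_assoc]
      _ = (1/4 : ℂ) • (1 : Matrix (Fin n) (Fin n) ℂ) := by
          rw [hWV, Matrix.mul_one, hbb]
  have hright : (Db * (W * fromBlocks Ea 0 0 Eb * Vᴴ) * Dbᵀ)
      * ((4 : ℂ) • (Db * (W * fromBlocks Δtil⁻¹ 0 0 0 * Vᴴ) * Dbᵀ)) = 1 := by
    have expand : Db * (W * fromBlocks Ea 0 0 Eb * Vᴴ) * Dbᵀ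
        * (Db * (W * fromBlocks Δtil⁻¹ 0 0 0 * Vᴴ) * Dbᵀ)
        = Db * W * (fromBlocks Ea 0 0 Eb * (Vᴴ * (Dbᵀ * Db) * W)
            * fromBlocks Δtil⁻¹ 0 0 0) * (Vᴴ * Dbᵀ) := by
      simp only [Matrix.mul_assoc]
    rw [Matrix.mul_smul, expand, hblack, chainR, smul_smul]
    norm_num
  have hleft : ((4 : ℂ) • (Db * (W * fromBlocks Δtil⁻¹ 0 0 0 * Vᴴ) * Dbᵀ))
      * (Db * (W * fromBlocks Ea 0 0 Eb * Vᴴ) * Dbᵀ) = 1 := by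
    have expand : Db * (W * fromBlocks Δtil⁻¹ 0 0 0 * Vᴴ) * Dbᵀ
        * (Db * (W * fromBlocks Ea 0 0 Eb * Vᴴ) * Dbᵀ)
        = Db * W * (fromBlocks Δtil⁻¹ 0 0 0 * (Vᴴ * (Dbᵀ * Db) * W)
            * fromBlocks Ea 0 0 Eb) * (Vᴴ * Dbᵀ) := by
      simp only [Matrix.mul_assoc]
    rw [Matrix.smul_mul, expand, hblack, chainL, smul_smul]
    norm_num
  rw [hAtil, hXeq]
  constructor
  · exact ⟨⟨_, _, hright, hleft⟩, rfl⟩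
  · exact Matrix.inv_eq_right_inv hright
end

section
/- In a red–black harmonic two-grid configuration with Δ̄ = Π̄_{R,L} Λ_L Π̄_{I,L} + Π̄_{R,H} Λ_H Π̄_{I,H} invertible, the red coarse grid correction matrix K̄ = I − (F̄_I Ū) Ā⁻¹ (D̄ F̄_R) A, where Ā = D̄ F̄_R A F̄_I Ū, admits the decomposition K̄ = W · [[Γ̄_{L→L}, Γ̄_{H→L}],[Γ̄_{L→H}, Γ̄_{H→H}]] · Vᴴ with diagonal blocks Γ̄_{L→L} = I − Π̄_{I,L} Δ̄⁻¹ Π̄_{R,L} Λ_L, Γ̄_{H→L} = −Π̄_{I,L} Δ̄⁻¹ Π̄_{R,H} Λ_H, Γ̄_{L→H} = −Π̄_{I,H} Δ̄⁻¹ Π̄_{R,L} Λ_L and Γ̄_{H→H} = I − Π̄_{I,H} Δ̄⁻¹ Π̄_{R,H} Λ_H. -/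
open Matrix

/-- A 2×2 block matrix all of whose blocks are diagonal. -/
noncomputable def blk {n : ℕ} (a b c d : Fin n → ℂ) :
    Matrix (Fin n ⊕ Fin n) (Fin n ⊕ Fin n) ℂ :=
  Matrix.fromBlocks (diagonal a) (diagonal b) (diagonal c) (diagonal d)

lemma blk_mul {n : ℕ} (a b c d a' b' c' d' : Fin n → ℂ) :
    blk a b c d * blk a' b' c' d' =
      blk (fun i => a i * a' i + b i * c' i) (fun i => a i * b' i + b i * d' i)
        (fun i => c i * a' i + d i * c' i) (fun i => c i * b' i + d i * d' i) := by
  simp [blk, Matrix.fromBlocks_multiply, Matrix.diagonal_mul_diagonal, Matrix.diagonal_add]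

lemma blk_ext {n : ℕ} {a b c d a' b' c' d' : Fin n → ℂ}
    (h1 : ∀ i, a i = a' i) (h2 : ∀ i, b i = b' i)
    (h3 : ∀ i, c i = c' i) (h4 : ∀ i, d i = d' i) :
    blk a b c d = blk a' b' c' d' := by
  unfold blk
  rw [funext h1, funext h2, funext h3, funext h4]

lemma blk_one {n : ℕ} :
    blk (fun _ : Fin n => (1 : ℂ)) (fun _ => 0) (fun _ => 0) (fun _ => 1) = 1 := by
  simp [blk, Matrix.diagonal_one, Matrix.diagonal_zero, Matrix.fromBlocks_one]

lemma Nbar_eq_blk (n : ℕ) :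
    Nbar n = blk (fun _ => (1 / 2 : ℂ)) (fun _ => 1 / 2) (fun _ => 1 / 2) (fun _ => 1 / 2) := by
  unfold Nbar blk
  rw [Matrix.fromBlocks_smul]
  have h : ((1 / 2 : ℂ) • (1 : Matrix (Fin n) (Fin n) ℂ)) = diagonal fun _ => (1 / 2 : ℂ) := by
    ext i j
    by_cases hij : i = j <;>
      simp [hij, Matrix.one_apply, Matrix.diagonal_apply]
  rw [h]

lemma blk_diag {n : ℕ} (a b : Fin n → ℂ) :
    Matrix.fromBlocks (diagonal a) 0 0 (diagonal b) = blk a (fun _ => 0) (fun _ => 0) b := by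
  simp [blk, Matrix.diagonal_zero]

lemma blk_sub {n : ℕ} (a b c d a' b' c' d' : Fin n → ℂ) :
    blk a b c d - blk a' b' c' d' =
      blk (fun i => a i - a' i) (fun i => b i - b' i)
        (fun i => c i - c' i) (fun i => d i - d' i) := by
  unfold blk
  rw [sub_eq_add_neg, Matrix.fromBlocks_neg, Matrix.fromBlocks_add]
  simp only [Matrix.diagonal_neg, Matrix.diagonal_add, sub_eq_add_neg]

set_option maxHeartbeats 1600000 in
/-- Eigen-decomposition of the red coarse grid correction matrix
`K̄ = I − Ī_I Ā⁻¹ Ī_R A` in a red–black harmonic two-grid configuration: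
`K̄ = W [[Γ̄_{L→L}, Γ̄_{H→L}], [Γ̄_{L→H}, Γ̄_{H→H}]] Vᴴ`. -/
theorem red_cgc_decomposition {n : ℕ}
    (Dr Db : Matrix (Fin n) (Fin n ⊕ Fin n) ℂ)
    (hpart : IsRBPartition Dr Db)
    (W V A : Matrix (Fin n ⊕ Fin n) (Fin n ⊕ Fin n) ℂ)
    (lamL lamH : Fin n → ℂ)
    (hbi : Vᴴ * W = 1)
    (hred : Vᴴ * (Drᵀ * Dr) * W = Nbar n)
    (hblack : Vᴴ * (Dbᵀ * Db) * W = Ntil n)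
    (hA : A = W * Matrix.fromBlocks (diagonal lamL) 0 0 (diagonal lamH) * Vᴴ)
    (pRL pRH pIL pIH : Fin n → ℂ)
    (FbarR FbarI : Matrix (Fin n ⊕ Fin n) (Fin n ⊕ Fin n) ℂ)
    (hFbarR : FbarR = W * Matrix.fromBlocks (diagonal pRL) 0 0 (diagonal pRH) * Vᴴ)
    (hFbarI : FbarI = W * Matrix.fromBlocks (diagonal pIL) 0 0 (diagonal pIH) * Vᴴ)
    (Δbar : Matrix (Fin n) (Fin n) ℂ)
    (hΔdef : Δbar = diagonal pRL * diagonal lamL * diagonal pIL +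
        diagonal pRH * diagonal lamH * diagonal pIH)
    (hΔ : IsUnit Δbar) :
    1 - (FbarI * Drᵀ) * (Dr * FbarR * A * FbarI * Drᵀ)⁻¹ * (Dr * FbarR) * A =
      W * Matrix.fromBlocks
        (1 - diagonal pIL * Δbar⁻¹ * diagonal pRL * diagonal lamL)
        (-(diagonal pIL * Δbar⁻¹ * diagonal pRH * diagonal lamH))
        (-(diagonal pIH * Δbar⁻¹ * diagonal pRL * diagonal lamL))
        (1 - diagonal pIH * Δbar⁻¹ * diagonal pRH * diagonal lamH) * Vᴴ := by
  classical
  obtain ⟨-, -, hDrDr, -, -, -, -⟩ := hpart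
  have hWV : W * Vᴴ = 1 := mul_eq_one_comm.mp hbi
  have hVWX : ∀ X : Matrix (Fin n ⊕ Fin n) (Fin n ⊕ Fin n) ℂ, Vᴴ * (W * X) = X := by
    intro X; rw [← Matrix.mul_assoc, hbi, Matrix.one_mul]
  have hWVX : ∀ X : Matrix (Fin n ⊕ Fin n) (Fin n ⊕ Fin n) ℂ, W * (Vᴴ * X) = X := by
    intro X; rw [← Matrix.mul_assoc, hWV, Matrix.one_mul]
  have sand : ∀ X Y : Matrix (Fin n ⊕ Fin n) (Fin n ⊕ Fin n) ℂ,
      (W * X * Vᴴ) * (W * Y * Vᴴ) = W * (X * Y) * Vᴴ := by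
    intro X Y
    simp only [Matrix.mul_assoc, hVWX]
  -- the diagonal of Δbar
  set d : Fin n → ℂ := fun i => pRL i * lamL i * pIL i + pRH i * lamH i * pIH i with hd_def
  have hΔd : Δbar = diagonal d := by
    rw [hΔdef, Matrix.diagonal_mul_diagonal, Matrix.diagonal_mul_diagonal,
        Matrix.diagonal_mul_diagonal, Matrix.diagonal_mul_diagonal, Matrix.diagonal_add]
  have hdnz : ∀ i, d i ≠ 0 := by
    have h1 : IsUnit Δbar.det := (Matrix.isUnit_iff_isUnit_det _).mp hΔ
    rw [hΔd, Matrix.det_diagonal] at h1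
    have h2 : (∏ i, d i) ≠ 0 := h1.ne_zero
    intro i
    exact Finset.prod_ne_zero_iff.mp h2 i (Finset.mem_univ i)
  have hΔinv : Δbar⁻¹ = diagonal (fun i => (d i)⁻¹) := by
    apply Matrix.inv_eq_right_inv
    rw [hΔd, Matrix.diagonal_mul_diagonal]
    have h : (fun i => d i * (d i)⁻¹) = fun _ => (1 : ℂ) :=
      funext fun i => mul_inv_cancel₀ (hdnz i)
    rw [h, Matrix.diagonal_one]
  have hd : ∀ i, d i = pRL i * lamL i * pIL i + pRH i * lamH i * pIH i := fun _ => rfl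
  clear hd_def hΔd hΔdef hΔ
  clear_value d
  -- the aliasing projection
  have hP : Drᵀ * Dr = W * Nbar n * Vᴴ := by
    conv_rhs => rw [← hred]
    simp only [Matrix.mul_assoc, hWV, Matrix.mul_one, hWVX]
  -- generic collapse lemma
  have hone : ∀ X : Matrix (Fin n ⊕ Fin n) (Fin n ⊕ Fin n) ℂ,
      Nbar n * X * Nbar n = Nbar n → Dr * (W * X * Vᴴ) * Drᵀ = 1 := by
    intro X hX
    have step : Dr * (W * X * Vᴴ) * Drᵀ
        = (Dr * Drᵀ) * (Dr * ((Drᵀ * Dr) * (W * X * Vᴴ) * (Drᵀ * Dr)) * Drᵀ) * (Dr * Drᵀ) := by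
      simp only [Matrix.mul_assoc, hDrDr]
      simp only [← Matrix.mul_assoc, hDrDr, Matrix.one_mul, Matrix.mul_one]
    rw [step, hDrDr, Matrix.one_mul, Matrix.mul_one, hP, sand, sand, hX, ← hP]
    simp only [← Matrix.mul_assoc, hDrDr, Matrix.one_mul]
  -- notations for the symbols
  have hPR : Matrix.fromBlocks (diagonal pRL) 0 0 (diagonal pRH)
      = blk pRL (fun _ => 0) (fun _ => 0) pRH := blk_diag _ _
  have hPI : Matrix.fromBlocks (diagonal pIL) 0 0 (diagonal pIH)
      = blk pIL (fun _ => 0) (fun _ => 0) pIH := blk_diag _ _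
  have hLm : Matrix.fromBlocks (diagonal lamL) 0 0 (diagonal lamH)
      = blk lamL (fun _ => 0) (fun _ => 0) lamH := blk_diag _ _
  set T : Matrix (Fin n ⊕ Fin n) (Fin n ⊕ Fin n) ℂ :=
    blk (fun i => 4 * (d i)⁻¹) (fun _ => 0) (fun _ => 0) (fun _ => 0) with hT_def
  -- the middle matrix of the coarse operator
  have hMid : FbarR * A * FbarI
      = W * (blk pRL (fun _ => 0) (fun _ => 0) pRH *
          (blk lamL (fun _ => 0) (fun _ => 0) lamH *
            blk pIL (fun _ => 0) (fun _ => 0) pIH)) * Vᴴ := by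
    rw [hFbarR, hA, hFbarI, hPR, hPI, hLm, sand, sand, Matrix.mul_assoc
      (blk pRL (fun _ => 0) (fun _ => 0) pRH)]
  -- inverse of the coarse operator
  have hAinv : (Dr * FbarR * A * FbarI * Drᵀ)⁻¹ = Dr * (W * T * Vᴴ) * Drᵀ := by
    apply Matrix.inv_eq_right_inv
    have regroup : Dr * FbarR * A * FbarI * Drᵀ * (Dr * (W * T * Vᴴ) * Drᵀ)
        = Dr * ((FbarR * A * FbarI) * ((Drᵀ * Dr) * (W * T * Vᴴ))) * Drᵀ := by
      simp only [Matrix.mul_assoc]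
    rw [regroup, hMid, hP, sand, sand]
    apply hone
    rw [Nbar_eq_blk, hT_def]
    simp only [blk_mul]
    apply blk_ext <;> intro i <;> field_simp [hdnz i] <;> simp only [hd] <;> ring
  -- reduce the correction term to a sandwich
  have hterm : (FbarI * Drᵀ) * (Dr * FbarR * A * FbarI * Drᵀ)⁻¹ * (Dr * FbarR) * A
      = W * (blk pIL (fun _ => 0) (fun _ => 0) pIH * (Nbar n * (T * (Nbar n *
          (blk pRL (fun _ => 0) (fun _ => 0) pRH *
            blk lamL (fun _ => 0) (fun _ => 0) lamH))))) * Vᴴ := by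
    rw [hAinv, hFbarI, hFbarR, hA, hPR, hPI, hLm]
    have regroup : W * blk pIL (fun _ => 0) (fun _ => 0) pIH * Vᴴ * Drᵀ *
          (Dr * (W * T * Vᴴ) * Drᵀ) * (Dr * (W * blk pRL (fun _ => 0) (fun _ => 0) pRH * Vᴴ)) *
          (W * blk lamL (fun _ => 0) (fun _ => 0) lamH * Vᴴ)
        = (W * blk pIL (fun _ => 0) (fun _ => 0) pIH * Vᴴ) * ((Drᵀ * Dr) * ((W * T * Vᴴ) *
            ((Drᵀ * Dr) * ((W * blk pRL (fun _ => 0) (fun _ => 0) pRH * Vᴴ) *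
              (W * blk lamL (fun _ => 0) (fun _ => 0) lamH * Vᴴ))))) := by
      simp only [Matrix.mul_assoc]
    rw [regroup, hP]
    simp only [sand]
  rw [hterm, hΔinv]
  -- turn the right-hand side into blk form
  have hRHSblocks :
      Matrix.fromBlocks
        (1 - diagonal pIL * diagonal (fun i => (d i)⁻¹) * diagonal pRL * diagonal lamL)
        (-(diagonal pIL * diagonal (fun i => (d i)⁻¹) * diagonal pRH * diagonal lamH))
        (-(diagonal pIH * diagonal (fun i => (d i)⁻¹) * diagonal pRL * diagonal lamL))
        (1 - diagonal pIH * diagonal (fun i => (d i)⁻¹) * diagonal pRH * diagonal lamH)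
      = blk (fun i => 1 - pIL i * (d i)⁻¹ * pRL i * lamL i)
          (fun i => -(pIL i * (d i)⁻¹ * pRH i * lamH i))
          (fun i => -(pIH i * (d i)⁻¹ * pRL i * lamL i))
          (fun i => 1 - pIH i * (d i)⁻¹ * pRH i * lamH i) := by
    unfold blk
    simp only [← Matrix.diagonal_one, Matrix.diagonal_mul_diagonal,
      Matrix.diagonal_sub, Matrix.diagonal_neg]
  rw [hRHSblocks]
  -- now everything is sandwiched between W and Vᴴ
  have hone' : (1 : Matrix (Fin n ⊕ Fin n) (Fin n ⊕ Fin n) ℂ)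
      = W * blk (fun _ => 1) (fun _ => 0) (fun _ => 0) (fun _ => 1) * Vᴴ := by
    rw [blk_one, Matrix.mul_one, hWV]
  conv_lhs => rw [hone']
  rw [← Matrix.sub_mul, ← Matrix.mul_sub]
  refine congrArg (fun X => X * Vᴴ) ?_
  refine congrArg (fun X => W * X) ?_
  rw [Nbar_eq_blk, hT_def]
  simp only [blk_mul, blk_sub]
  apply blk_ext <;> intro i <;> field_simp [hdnz i] <;> simp only [hd] <;> ring
end

section
/- In a red–black harmonic two-grid configuration with Δ̃ = Π̃_{R,L} Λ_L Π̃_{I,L} + Π̃_{R,H} Λ_H Π̃_{I,H} invertible, the black coarse grid correction matrix K̃ = I − (F̃_I Ũ) Ã⁻¹ (D̃ F̃_R) A, where Ã = D̃ F̃_R A F̃_I Ũ, admits the decomposition K̃ = W · [[Γ̃_{L→L}, Γ̃_{H→L}],[Γ̃_{L→H}, Γ̃_{H→H}]] · Vᴴ with diagonal blocks Γ̃_{L→L} = I − Π̃_{I,L} Δ̃⁻¹ Π̃_{R,L} Λ_L, Γ̃_{H→L} = +Π̃_{I,L} Δ̃⁻¹ Π̃_{R,H} Λ_H, Γ̃_{L→H}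 = +Π̃_{I,H} Δ̃⁻¹ Π̃_{R,L} Λ_L and Γ̃_{H→H} = I − Π̃_{I,H} Δ̃⁻¹ Π̃_{R,H} Λ_H. -/
open Matrix

/-- Eigen-decomposition of the black coarse grid correction matrix
`K̃ = I − Ĩ_I Ã⁻¹ Ĩ_R A` in a red–black harmonic two-grid configuration:
`K̃ = W [[Γ̃_{L→L}, Γ̃_{H→L}], [Γ̃_{L→H}, Γ̃_{H→H}]] Vᴴ` (with `+` signs in the
off-diagonal, aliasing, blocks). -/
theorem black_cgc_decomposition {n : ℕ}
    (Dr Db : Matrix (Fin n) (Fin n ⊕ Fin n) ℂ)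
    (hpart : IsRBPartition Dr Db)
    (W V A : Matrix (Fin n ⊕ Fin n) (Fin n ⊕ Fin n) ℂ)
    (lamL lamH : Fin n → ℂ)
    (hbi : Vᴴ * W = 1)
    (hred : Vᴴ * (Drᵀ * Dr) * W = Nbar n)
    (hblack : Vᴴ * (Dbᵀ * Db) * W = Ntil n)
    (hA : A = W * Matrix.fromBlocks (diagonal lamL) 0 0 (diagonal lamH) * Vᴴ)
    (qRL qRH qIL qIH : Fin n → ℂ)
    (FtilR FtilI : Matrix (Fin n ⊕ Fin n) (Fin n ⊕ Fin n) ℂ)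
    (hFtilR : FtilR = W * Matrix.fromBlocks (diagonal qRL) 0 0 (diagonal qRH) * Vᴴ)
    (hFtilI : FtilI = W * Matrix.fromBlocks (diagonal qIL) 0 0 (diagonal qIH) * Vᴴ)
    (Δtil : Matrix (Fin n) (Fin n) ℂ)
    (hΔdef : Δtil = diagonal qRL * diagonal lamL * diagonal qIL +
        diagonal qRH * diagonal lamH * diagonal qIH)
    (hΔ : IsUnit Δtil) :
    1 - (FtilI * Dbᵀ) * (Db * FtilR * A * FtilI * Dbᵀ)⁻¹ * (Db * FtilR) * A =
      W * Matrix.fromBlocks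
        (1 - diagonal qIL * Δtil⁻¹ * diagonal qRL * diagonal lamL)
        (diagonal qIL * Δtil⁻¹ * diagonal qRH * diagonal lamH)
        (diagonal qIH * Δtil⁻¹ * diagonal qRL * diagonal lamL)
        (1 - diagonal qIH * Δtil⁻¹ * diagonal qRH * diagonal lamH) * Vᴴ := by
  obtain ⟨-, -, -, hDbDb, -, -, -⟩ := hpart
  have hblack2 : Vᴴ * (Dbᵀ * Db) * W = (1 / 2 : ℂ) • Matrix.fromBlocks 1 (-1) (-1) 1 := by
    rw [hblack]; rfl
  have hWV : W * Vᴴ = 1 := mul_eq_one_comm.mp hbi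
  have hΔdet : IsUnit Δtil.det := (Matrix.isUnit_iff_isUnit_det _).mp hΔ
  have hΔr : Δtil * Δtil⁻¹ = 1 := Matrix.mul_nonsing_inv _ hΔdet
  have hΔl : Δtil⁻¹ * Δtil = 1 := Matrix.nonsing_inv_mul _ hΔdet
  set N : Matrix (Fin n ⊕ Fin n) (Fin n ⊕ Fin n) ℂ :=
    (1 / 2 : ℂ) • Matrix.fromBlocks 1 (-1) (-1) 1 with hNdef
  set PR : Matrix (Fin n ⊕ Fin n) (Fin n ⊕ Fin n) ℂ :=
    fromBlocks (diagonal qRL) 0 0 (diagonal qRH) with hPR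
  set PI : Matrix (Fin n ⊕ Fin n) (Fin n ⊕ Fin n) ℂ :=
    fromBlocks (diagonal qIL) 0 0 (diagonal qIH) with hPI
  set Lam : Matrix (Fin n ⊕ Fin n) (Fin n ⊕ Fin n) ℂ :=
    fromBlocks (diagonal lamL) 0 0 (diagonal lamH) with hLam
  set X : Matrix (Fin n ⊕ Fin n) (Fin n ⊕ Fin n) ℂ := PR * Lam * PI with hXdef
  set Y : Matrix (Fin n ⊕ Fin n) (Fin n ⊕ Fin n) ℂ :=
    (2 : ℂ) • fromBlocks Δtil⁻¹ 0 0 Δtil⁻¹ with hYdef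
  set Yc : Matrix (Fin n ⊕ Fin n) (Fin n ⊕ Fin n) ℂ :=
    fromBlocks Δtil⁻¹ (-Δtil⁻¹) (-Δtil⁻¹) Δtil⁻¹ with hYc
  -- basic structural identities
  have hDbtDb : Dbᵀ * Db = W * N * Vᴴ := by
    rw [← hblack2]
    simp only [Matrix.mul_assoc]
    rw [hWV, Matrix.mul_one, ← Matrix.mul_assoc, hWV, one_mul]
  have hTS : (Vᴴ * Dbᵀ) * (Db * W) = N := by
    simpa only [Matrix.mul_assoc] using hblack2
  have hST : (Db * W) * (Vᴴ * Dbᵀ) = 1 := by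
    rw [Matrix.mul_assoc, ← Matrix.mul_assoc W, hWV]
    simp [hDbDb]
  have hWN : W * N = Dbᵀ * Db * W := by
    rw [hDbtDb, Matrix.mul_assoc, Matrix.mul_assoc, hbi, mul_one]
  have hNV : N * Vᴴ = Vᴴ * (Dbᵀ * Db) := by
    have : (Vᴴ * W) * (N * Vᴴ) = Vᴴ * (Dbᵀ * Db) := by
      rw [Matrix.mul_assoc V.conjTranspose W _, ← Matrix.mul_assoc W, hDbtDb]
    rw [hbi, one_mul] at this
    exact this
  have hSN : (Db * W) * N = Db * W := by
    rw [Matrix.mul_assoc, hWN, ← Matrix.mul_assoc, ← Matrix.mul_assoc, hDbDb]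
    simp
  have hNT : N * (Vᴴ * Dbᵀ) = Vᴴ * Dbᵀ := by
    rw [← Matrix.mul_assoc, hNV, Matrix.mul_assoc, Matrix.mul_assoc, hDbDb]
    simp
  -- right-associated rewrite rules
  have c1 : ∀ {m : Type} (Z : Matrix (Fin n ⊕ Fin n) m ℂ), Vᴴ * (W * Z) = Z := by
    intro m Z; rw [← Matrix.mul_assoc, hbi, Matrix.one_mul]
  have c2 : ∀ {m : Type} (Z : Matrix (Fin n ⊕ Fin n) m ℂ),
      Vᴴ * (Dbᵀ * (Db * (W * Z))) = N * Z := by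
    intro m Z
    have := congrArg (fun M => M * Z) hblack2
    simpa only [Matrix.mul_assoc] using this
  have hSN' : ∀ {m : Type} (Z : Matrix (Fin n ⊕ Fin n) m ℂ),
      Db * (W * (N * Z)) = Db * (W * Z) := by
    intro m Z
    have := congrArg (fun M => M * Z) hSN
    simpa only [Matrix.mul_assoc] using this
  -- block computations
  have hX : X = fromBlocks (diagonal qRL * diagonal lamL * diagonal qIL) 0 0
      (diagonal qRH * diagonal lamH * diagonal qIH) := by
    simp [hXdef, hPR, hPI, hLam, Matrix.fromBlocks_multiply]
  set ML := diagonal qRL * diagonal lamL * diagonal qIL with hML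
  set MH := diagonal qRH * diagonal lamH * diagonal qIH with hMH
  have hΔr' : (ML + MH) * Δtil⁻¹ = 1 := by rw [← hΔdef]; exact hΔr
  have hΔl' : Δtil⁻¹ * (ML + MH) = 1 := by rw [← hΔdef]; exact hΔl
  have hblk2 : N * (X * (N * (Y * N))) = N := by
    rw [hX, hNdef, hYdef]
    simp [Matrix.fromBlocks_multiply, Matrix.smul_mul, Matrix.mul_smul, smul_smul, mul_add,
      add_mul, sub_mul, mul_sub]
    have h2 : ML * Δtil⁻¹ + MH * Δtil⁻¹ = 1 := by rw [← add_mul, hΔr']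
    have hb1 : ML * Δtil⁻¹ + ML * Δtil⁻¹ + (MH * Δtil⁻¹ + MH * Δtil⁻¹) =
        (2:ℂ) • (1 : Matrix (Fin n) (Fin n) ℂ) := by rw [← h2]; module
    have hb2 : -(ML * Δtil⁻¹) + -(ML * Δtil⁻¹) + (-(MH * Δtil⁻¹) + -(MH * Δtil⁻¹)) =
        (2:ℂ) • (-1 : Matrix (Fin n) (Fin n) ℂ) := by rw [← h2]; module
    rw [hb1, hb2, ← Matrix.fromBlocks_smul, smul_smul]
    norm_num
  have hblk1 : N * (Y * (N * (X * N))) = N := by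
    rw [hX, hNdef, hYdef]
    simp [Matrix.fromBlocks_multiply, Matrix.smul_mul, Matrix.mul_smul, smul_smul, mul_add,
      add_mul, sub_mul, mul_sub]
    have h2 : Δtil⁻¹ * ML + Δtil⁻¹ * MH = 1 := by rw [← mul_add, hΔl']
    have hb1 : Δtil⁻¹ * ML + Δtil⁻¹ * MH + (Δtil⁻¹ * ML + Δtil⁻¹ * MH) =
        (2:ℂ) • (1 : Matrix (Fin n) (Fin n) ℂ) := by rw [h2]; module
    have hb2 : -(Δtil⁻¹ * ML) + -(Δtil⁻¹ * MH) + (-(Δtil⁻¹ * ML) + -(Δtil⁻¹ * MH)) =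
        (2:ℂ) • (-1 : Matrix (Fin n) (Fin n) ℂ) := by
      have e : -(Δtil⁻¹ * ML) + -(Δtil⁻¹ * MH) + (-(Δtil⁻¹ * ML) + -(Δtil⁻¹ * MH)) =
          (-2:ℂ) • (Δtil⁻¹ * ML + Δtil⁻¹ * MH) := by module
      rw [e, h2]; module
    rw [hb1, hb2, ← Matrix.fromBlocks_smul, smul_smul]
    norm_num
  have hNYN : N * (Y * N) = Yc := by
    rw [hNdef, hYdef, hYc]
    simp [Matrix.fromBlocks_multiply, Matrix.smul_mul, Matrix.mul_smul, smul_smul, mul_add,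
      add_mul, sub_mul, mul_sub]
    have e1 : Δtil⁻¹ + Δtil⁻¹ = (2:ℂ) • Δtil⁻¹ := by module
    have e2 : -Δtil⁻¹ + -Δtil⁻¹ = (2:ℂ) • (-Δtil⁻¹) := by module
    rw [e1, e2, ← Matrix.fromBlocks_smul, smul_smul]
    norm_num
  -- trailing-form versions of the block identities
  have hblk1' : ∀ {m : Type} (Z : Matrix (Fin n ⊕ Fin n) m ℂ),
      N * (Y * (N * (X * (N * Z)))) = N * Z := by
    intro m Z
    have := congrArg (fun M => M * Z) hblk1
    simpa only [Matrix.mul_assoc] using this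
  have hNYN' : ∀ {m : Type} (Z : Matrix (Fin n ⊕ Fin n) m ℂ),
      N * (Y * (N * Z)) = Yc * Z := by
    intro m Z
    have := congrArg (fun M => M * Z) hNYN
    simpa only [Matrix.mul_assoc] using this
  -- the Galerkin coarse matrix and its inverse
  have hAt : Db * FtilR * A * FtilI * Dbᵀ = Db * (W * (X * (Vᴴ * Dbᵀ))) := by
    rw [hFtilR, hA, hFtilI, hXdef]
    simp only [Matrix.mul_assoc, c1]
  have hinv : (Db * FtilR * A * FtilI * Dbᵀ)⁻¹ = Db * (W * (Y * (Vᴴ * Dbᵀ))) := by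
    rw [hAt]
    apply Matrix.inv_eq_left_inv
    simp only [Matrix.mul_assoc]
    rw [c2 (X * (Vᴴ * Dbᵀ)),
      show Vᴴ * Dbᵀ = N * (Vᴴ * Dbᵀ) from hNT.symm,
      ← hSN' (Y * (N * (X * (N * (Vᴴ * Dbᵀ))))),
      hblk1' (Vᴴ * Dbᵀ), hNT, ← Matrix.mul_assoc, hST]
  -- final block identity
  set Gneg : Matrix (Fin n ⊕ Fin n) (Fin n ⊕ Fin n) ℂ :=
    fromBlocks (diagonal qIL * Δtil⁻¹ * diagonal qRL * diagonal lamL)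
      (-(diagonal qIL * Δtil⁻¹ * diagonal qRH * diagonal lamH))
      (-(diagonal qIH * Δtil⁻¹ * diagonal qRL * diagonal lamL))
      (diagonal qIH * Δtil⁻¹ * diagonal qRH * diagonal lamH) with hGneg
  have hfin : PI * (Yc * (PR * Lam)) = Gneg := by
    rw [hPI, hYc, hPR, hLam, hGneg]
    simp only [Matrix.fromBlocks_multiply, Matrix.mul_zero, Matrix.zero_mul, add_zero, zero_add,
      Matrix.neg_mul, Matrix.mul_neg, neg_zero, Matrix.mul_assoc]
  have hfin' : PI * (Yc * (PR * (Lam * Vᴴ))) = Gneg * Vᴴ := by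
    have := congrArg (fun M => M * Vᴴ) hfin
    simpa only [Matrix.mul_assoc] using this
  -- assemble
  rw [hinv, hFtilI, hFtilR, hA]
  simp only [Matrix.mul_assoc, c1, c2]
  rw [hNYN' (PR * (Lam * Vᴴ)), hfin']
  have hG : Matrix.fromBlocks
        (1 - diagonal qIL * Δtil⁻¹ * diagonal qRL * diagonal lamL)
        (diagonal qIL * Δtil⁻¹ * diagonal qRH * diagonal lamH)
        (diagonal qIH * Δtil⁻¹ * diagonal qRL * diagonal lamL)
        (1 - diagonal qIH * Δtil⁻¹ * diagonal qRH * diagonal lamH) = 1 - Gneg := by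
    rw [hGneg, ← Matrix.fromBlocks_one (l := Fin n) (m := Fin n)]
    simp only [sub_eq_add_neg, Matrix.fromBlocks_neg, Matrix.fromBlocks_add, neg_neg, zero_add]
  have final' : (1 : Matrix (Fin n ⊕ Fin n) (Fin n ⊕ Fin n) ℂ) - W * (Gneg * Vᴴ) =
      W * ((1 - Gneg) * Vᴴ) := by
    rw [Matrix.sub_mul, Matrix.one_mul, Matrix.mul_sub, hWV]
  rw [final', ← hG]
  simp only [Matrix.mul_assoc]
end

section
/- Under the multiplicative direct two-grid configuration F̄_I = F̄_R = F̃_R = I and F̃_I = A⋆ in a red–black harmonic two-grid configuration with A non-singular and det(Λ_L + Λ_H) ≠ 0, the coarse symbol matrices satisfy Δ̄ = Λ_L + Λ_H and Δ̃ = 2 Λ_L Λ_H; in particular both Galerkin coarse matrices Ā = D̄ A Ū and Ã = D̃ A A⋆ Ũ are invertible. -/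
open Matrix

/-- Under the multiplicative direct two-grid configuration
`F̄_I = F̄_R = F̃_R = I`, `F̃_I = A⋆` (symbols `Π̄_R, Π̄_I, Π̃_R` of the identity
and `Π̃_I` of the mirror `A⋆`), the coarse symbol matrices satisfy
`Δ̄ = Λ_L + Λ_H` and `Δ̃ = 2 Λ_L Λ_H`; in particular both Galerkin coarse
matrices `Ā = D̄ A Ū` and `Ã = D̃ A A⋆ Ũ` are invertible. -/
theorem multiplicative_mirror_coarse_symbols {n : ℕ}
    (Dr Db : Matrix (Fin n) (Fin n ⊕ Fin n) ℂ)
    (hpart : IsRBPartition Dr Db)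
    (W V A : Matrix (Fin n ⊕ Fin n) (Fin n ⊕ Fin n) ℂ)
    (lamL lamH : Fin n → ℂ)
    (hbi : Vᴴ * W = 1)
    (hred : Vᴴ * (Drᵀ * Dr) * W = Nbar n)
    (hblack : Vᴴ * (Dbᵀ * Db) * W = Ntil n)
    (hA : A = W * Matrix.fromBlocks (diagonal lamL) 0 0 (diagonal lamH) * Vᴴ)
    (hAu : IsUnit A)
    (hdet : (diagonal lamL + diagonal lamH).det ≠ 0)
    (pRL pRH pIL pIH qRL qRH qIL qIH : Fin n → ℂ)
    (hFbarR : W * Matrix.fromBlocks (diagonal pRL) 0 0 (diagonal pRH) * Vᴴ = 1)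
    (hFbarI : W * Matrix.fromBlocks (diagonal pIL) 0 0 (diagonal pIH) * Vᴴ = 1)
    (hFtilR : W * Matrix.fromBlocks (diagonal qRL) 0 0 (diagonal qRH) * Vᴴ = 1)
    (hFtilI : W * Matrix.fromBlocks (diagonal qIL) 0 0 (diagonal qIH) * Vᴴ =
        mirror Dr Db A) :
    diagonal pRL * diagonal lamL * diagonal pIL +
        diagonal pRH * diagonal lamH * diagonal pIH =
      diagonal lamL + diagonal lamH ∧
    diagonal qRL * diagonal lamL * diagonal qIL +
        diagonal qRH * diagonal lamH * diagonal qIH =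
      (2 : ℂ) • (diagonal lamL * diagonal lamH) ∧
    IsUnit (Dr * A * Drᵀ) ∧
    IsUnit (Db * A * mirror Dr Db A * Dbᵀ) := by
  obtain ⟨-, -, hDrDr, hDbDb, -, -, hsum⟩ := hpart
  have hWV : W * Vᴴ = 1 := mul_eq_one_comm.mp hbi
  set Λ : Matrix (Fin n ⊕ Fin n) (Fin n ⊕ Fin n) ℂ :=
    Matrix.fromBlocks (diagonal lamL) 0 0 (diagonal lamH) with hΛ
  -- collapse lemmas
  have hcW : ∀ X : Matrix (Fin n ⊕ Fin n) (Fin n ⊕ Fin n) ℂ, Vᴴ * (W * X) = X := by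
    intro X; rw [← Matrix.mul_assoc, hbi, Matrix.one_mul]
  have hcW' : ∀ X : Matrix (Fin n ⊕ Fin n) (Fin n) ℂ, Vᴴ * (W * X) = X := by
    intro X; rw [← Matrix.mul_assoc, hbi, Matrix.one_mul]
  have hconj : ∀ X : Matrix (Fin n ⊕ Fin n) (Fin n ⊕ Fin n) ℂ,
      Vᴴ * (W * X * Vᴴ) * W = X := by
    intro X
    calc Vᴴ * (W * X * Vᴴ) * W = (Vᴴ * W) * X * (Vᴴ * W) := by
          simp only [Matrix.mul_assoc]
      _ = X := by rw [hbi, Matrix.one_mul, Matrix.mul_one]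
  -- extraction lemmas
  have hext : ∀ X M : Matrix (Fin n ⊕ Fin n) (Fin n ⊕ Fin n) ℂ,
      W * X * Vᴴ = M → X = Vᴴ * M * W := by
    intro X M h
    rw [← h, hconj]
  have hext' : ∀ X M : Matrix (Fin n ⊕ Fin n) (Fin n ⊕ Fin n) ℂ,
      Vᴴ * X * W = M → X = W * M * Vᴴ := by
    intro X M h
    calc X = (W * Vᴴ) * X * (W * Vᴴ) := by rw [hWV, Matrix.one_mul, Matrix.mul_one]
      _ = W * (Vᴴ * X * W) * Vᴴ := by simp only [Matrix.mul_assoc]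
      _ = W * M * Vᴴ := by rw [h]
  -- filter symbols of the identity are the identity
  have hId : ∀ a b : Fin n → ℂ,
      W * Matrix.fromBlocks (diagonal a) 0 0 (diagonal b) * Vᴴ = 1 →
      diagonal a = 1 ∧ diagonal b = 1 := by
    intro a b h
    have h1 := hext _ _ h
    rw [Matrix.mul_one, hbi, ← Matrix.fromBlocks_one] at h1
    obtain ⟨e1, -, -, e2⟩ := Matrix.fromBlocks_inj.mp h1
    exact ⟨e1, e2⟩
  obtain ⟨hpR1, hpR2⟩ := hId _ _ hFbarR
  obtain ⟨hpI1, hpI2⟩ := hId _ _ hFbarI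
  obtain ⟨hqR1, hqR2⟩ := hId _ _ hFtilR
  -- projections in the eigenbasis
  have hPr : Drᵀ * Dr = W * Nbar n * Vᴴ := hext' _ _ hred
  have hPb : Dbᵀ * Db = W * Ntil n * Vᴴ := hext' _ _ hblack
  -- the mirror symbol
  set S : Matrix (Fin n ⊕ Fin n) (Fin n ⊕ Fin n) ℂ := Matrix.fromBlocks 0 1 1 0 with hSdef
  have h2smul : ((1:ℂ)/2) • ((1:Matrix (Fin n) (Fin n) ℂ) + 1) = 1 := by
    rw [← two_smul ℂ, smul_smul]; norm_num
  have hNS : Nbar n - Ntil n = S := by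
    rw [hSdef, Nbar, Ntil, ← smul_sub, sub_eq_add_neg, Matrix.fromBlocks_neg,
      Matrix.fromBlocks_add, Matrix.fromBlocks_smul]
    ext i j
    rcases i with i | i <;> rcases j with j | j <;>
      simp [Matrix.one_apply, Matrix.smul_apply, Matrix.add_apply] <;>
        split_ifs <;> norm_num
  have hSΛS : S * Λ * S = Matrix.fromBlocks (diagonal lamH) 0 0 (diagonal lamL) := by
    rw [hSdef, hΛ, Matrix.fromBlocks_multiply, Matrix.fromBlocks_multiply]
    simp only [Matrix.zero_mul, Matrix.mul_zero, Matrix.one_mul, Matrix.mul_one,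
      add_zero, zero_add]
  have hmirA : mirror Dr Db A = W * (S * Λ * S) * Vᴴ := by
    rw [mirror, hPr, hPb, hA]
    rw [show W * Nbar n * Vᴴ - W * Ntil n * Vᴴ = W * S * Vᴴ from by
      rw [← hNS, Matrix.mul_sub, Matrix.sub_mul]]
    simp only [Matrix.mul_assoc, hcW]
  have hqI := hext _ _ (hFtilI.trans hmirA)
  rw [hconj, hSΛS] at hqI
  obtain ⟨hqI1, -, -, hqI2⟩ := Matrix.fromBlocks_inj.mp hqI
  refine ⟨?_, ?_, ?_, ?_⟩
  · rw [hpR1, hpR2, hpI1, hpI2, Matrix.one_mul, Matrix.one_mul, Matrix.mul_one, Matrix.mul_one]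
  · rw [hqR1, hqR2, hqI1, hqI2, Matrix.one_mul, Matrix.one_mul, two_smul]
    congr 1
    rw [Matrix.diagonal_mul_diagonal, Matrix.diagonal_mul_diagonal,
      show (fun i => lamH i * lamL i) = fun i => lamL i * lamH i from
        funext fun i => mul_comm _ _]
  · -- red coarse matrix invertible
    have hdprod : ∀ i, lamL i + lamH i ≠ 0 := by
      intro i hi
      exact hdet (by
        rw [Matrix.diagonal_add, Matrix.det_diagonal]
        exact Finset.prod_eq_zero (Finset.mem_univ i) hi)
    set dinv : Fin n → ℂ := fun i => (lamL i + lamH i)⁻¹ with hdinv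
    set Dinv : Matrix (Fin n ⊕ Fin n) (Fin n ⊕ Fin n) ℂ :=
      Matrix.fromBlocks (diagonal dinv) 0 0 (diagonal dinv) with hDinv
    set F : Matrix (Fin n ⊕ Fin n) (Fin n ⊕ Fin n) ℂ := Matrix.fromBlocks 1 1 1 1 with hF
    have hkey : (diagonal lamL + diagonal lamH) * diagonal dinv
        = (1 : Matrix (Fin n) (Fin n) ℂ) := by
      rw [Matrix.diagonal_add, Matrix.diagonal_mul_diagonal,
        show (fun i => (lamL i + lamH i) * dinv i) = fun _ => (1:ℂ) from
          funext fun i => mul_inv_cancel₀ (hdprod i),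
        Matrix.diagonal_one]
    have hFLFD : F * Λ * F * Dinv = F := by
      rw [hF, hΛ, hDinv]
      simp only [Matrix.fromBlocks_multiply, Matrix.one_mul, Matrix.mul_one, Matrix.mul_zero,
        Matrix.zero_mul, add_zero, zero_add, Matrix.add_mul, hkey]
    have hFF : F * F = (2:ℂ) • F := by
      rw [hF, Matrix.fromBlocks_multiply, Matrix.fromBlocks_smul]
      congr 1 <;> simp [two_smul]
    have hsym : Nbar n * Λ * Nbar n * Dinv * Nbar n = (1/2:ℂ) • Nbar n := by
      rw [Nbar]
      simp only [smul_mul_assoc, mul_smul_comm, smul_smul]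
      rw [hFLFD, hFF, smul_smul]
      norm_num
      exact hF
    have hDrP : Dr * (Drᵀ * Dr) = Dr := by rw [← Matrix.mul_assoc, hDrDr, Matrix.one_mul]
    have hPDr : Drᵀ * Dr * Drᵀ = Drᵀ := by rw [Matrix.mul_assoc, hDrDr, Matrix.mul_one]
    set Cinv : Matrix (Fin n ⊕ Fin n) (Fin n ⊕ Fin n) ℂ := W * Dinv * Vᴴ with hCinv
    have e1 : (Dr * A * Drᵀ) * (Dr * Cinv * Drᵀ)
        = (Dr * (Drᵀ * Dr)) * A * (Drᵀ * Dr) * Cinv * ((Drᵀ * Dr) * Drᵀ) := by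
      rw [hDrP, hPDr]
      simp only [Matrix.mul_assoc]
    have e2 : (Dr * (Drᵀ * Dr)) * A * (Drᵀ * Dr) * Cinv * ((Drᵀ * Dr) * Drᵀ)
        = Dr * (W * (Nbar n * Λ * Nbar n * Dinv * Nbar n) * Vᴴ) * Drᵀ := by
      rw [hPr, hA, hCinv]
      simp only [Matrix.mul_assoc, hcW, hcW']
    have e3 : Dr * (W * Nbar n * Vᴴ) * Drᵀ = 1 := by
      rw [← hPr, hDrP, hDrDr]
    have hone : (Dr * A * Drᵀ) * ((2:ℂ) • (Dr * Cinv * Drᵀ)) = 1 := by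
      rw [Matrix.mul_smul, e1, e2, hsym]
      simp only [Matrix.mul_smul, Matrix.smul_mul, smul_smul]
      rw [e3]
      norm_num
    exact ⟨⟨Dr * A * Drᵀ, (2:ℂ) • (Dr * Cinv * Drᵀ), hone,
      mul_eq_one_comm.mp hone⟩, rfl⟩
  · -- black coarse matrix invertible
    have hWu : IsUnit W := ⟨⟨W, Vᴴ, hWV, hbi⟩, rfl⟩
    have hVu : IsUnit (Vᴴ) := ⟨⟨Vᴴ, W, hbi, hWV⟩, rfl⟩
    have hLu : IsUnit Λ := by
      rw [hext _ _ hA.symm]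
      exact (hVu.mul hAu).mul hWu
    have hdetL : Λ.det ≠ 0 :=
      ((Matrix.isUnit_iff_isUnit_det Λ).mp hLu).ne_zero
    have hprodne : (∏ i, lamL i) * ∏ i, lamH i ≠ 0 := by
      rwa [hΛ, Matrix.det_fromBlocks_zero₂₁, Matrix.det_diagonal, Matrix.det_diagonal] at hdetL
    have hLHne : ∀ i, lamL i * lamH i ≠ 0 := by
      intro i
      refine mul_ne_zero (fun h => hprodne ?_) (fun h => hprodne ?_)
      · rw [mul_eq_zero]; exact Or.inl (Finset.prod_eq_zero (Finset.mem_univ i) h)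
      · rw [mul_eq_zero]; exact Or.inr (Finset.prod_eq_zero (Finset.mem_univ i) h)
    set einv : Fin n → ℂ := fun i => (lamL i * lamH i)⁻¹ with heinv
    set Einv : Matrix (Fin n ⊕ Fin n) (Fin n ⊕ Fin n) ℂ :=
      Matrix.fromBlocks (diagonal einv) 0 0 (diagonal einv) with hEinv
    set G : Matrix (Fin n ⊕ Fin n) (Fin n ⊕ Fin n) ℂ :=
      Matrix.fromBlocks 1 (-1) (-1) 1 with hG
    have hk1 : diagonal lamL * diagonal lamH * diagonal einv
        = (1 : Matrix (Fin n) (Fin n) ℂ) := by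
      rw [Matrix.diagonal_mul_diagonal, Matrix.diagonal_mul_diagonal,
        show (fun i => lamL i * lamH i * einv i) = fun _ => (1:ℂ) from
          funext fun i => mul_inv_cancel₀ (hLHne i),
        Matrix.diagonal_one]
    have hk2 : diagonal lamH * diagonal lamL * diagonal einv
        = (1 : Matrix (Fin n) (Fin n) ℂ) := by
      rw [Matrix.diagonal_mul_diagonal, Matrix.diagonal_mul_diagonal,
        show (fun i => lamH i * lamL i * einv i) = fun _ => (1:ℂ) from
          funext fun i => by rw [mul_comm (lamH i)]; exact mul_inv_cancel₀ (hLHne i),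
        Matrix.diagonal_one]
    have hGXGE : G * (Λ * (S * Λ * S)) * G * Einv = (2:ℂ) • G := by
      rw [hSΛS, hΛ, hG, hEinv]
      simp only [Matrix.fromBlocks_multiply, Matrix.one_mul, Matrix.mul_one, Matrix.mul_zero,
        Matrix.zero_mul, add_zero, zero_add, Matrix.add_mul, Matrix.neg_mul, Matrix.mul_neg,
        neg_neg, neg_add_rev, hk1, hk2, Matrix.fromBlocks_smul, smul_neg, two_smul,
        Matrix.fromBlocks_add]
    have hGG : G * G = (2:ℂ) • G := by
      rw [hG, Matrix.fromBlocks_multiply, Matrix.fromBlocks_smul]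
      congr 1 <;> simp [two_smul]
    have hsym2 : Ntil n * (Λ * (S * Λ * S)) * Ntil n * Einv * Ntil n = Ntil n := by
      rw [Ntil]
      simp only [smul_mul_assoc, mul_smul_comm, smul_smul]
      rw [hGXGE, smul_mul_assoc, hGG, smul_smul, smul_smul]
      norm_num
      exact hG
    have hDbP : Db * (Dbᵀ * Db) = Db := by rw [← Matrix.mul_assoc, hDbDb, Matrix.one_mul]
    have hPDb : Dbᵀ * Db * Dbᵀ = Dbᵀ := by rw [Matrix.mul_assoc, hDbDb, Matrix.mul_one]
    set Cinv2 : Matrix (Fin n ⊕ Fin n) (Fin n ⊕ Fin n) ℂ := W * Einv * Vᴴ with hCinv2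
    have e1 : (Db * A * mirror Dr Db A * Dbᵀ) * (Db * Cinv2 * Dbᵀ)
        = (Db * (Dbᵀ * Db)) * A * mirror Dr Db A * (Dbᵀ * Db) * Cinv2
            * ((Dbᵀ * Db) * Dbᵀ) := by
      rw [hDbP, hPDb]
      simp only [Matrix.mul_assoc]
    have e2 : (Db * (Dbᵀ * Db)) * A * mirror Dr Db A * (Dbᵀ * Db) * Cinv2
          * ((Dbᵀ * Db) * Dbᵀ)
        = Db * (W * (Ntil n * (Λ * (S * Λ * S)) * Ntil n * Einv * Ntil n) * Vᴴ) * Dbᵀ := by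
      rw [hmirA, hA, hPb, hCinv2]
      simp only [Matrix.mul_assoc, hcW, hcW']
    have e3 : Db * (W * Ntil n * Vᴴ) * Dbᵀ = 1 := by
      rw [← hPb, hDbP, hDbDb]
    have hone : (Db * A * mirror Dr Db A * Dbᵀ) * (Db * Cinv2 * Dbᵀ) = 1 := by
      rw [e1, e2, hsym2, e3]
    exact ⟨⟨Db * A * mirror Dr Db A * Dbᵀ, Db * Cinv2 * Dbᵀ, hone,
      mul_eq_one_comm.mp hone⟩, rfl⟩
end

section
/- Let n be even, let M ∈ ℂ^{n×n} have a black harmonic aliasing pattern with respect to a red–black partition with down-sampling matrix D̃, i.e. Vᴴ Ũ D̃ W = Ñ for biorthogonal eigenvectors W = [W_L W_H], V = [V_L V_H] (Vᴴ W = I). Then the down-sampled eigenvector blocks satisfy the biorthogonality relations (D̃ V_L)ᴴ (D̃ W_L) = (1/2) I, (D̃ V_L)ᴴ (D̃ W_H) = −(1/2) I, (D̃ V_H)ᴴ (D̃ W_L) = −(1/2) I, (D̃ V_H)ᴴ (D̃ W_H) = (1/2) I, and moreover (D̃ W)(D̃ V)ᴴ = (D̃ W_L)(D̃ V_L)ᴴ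 + (D̃ W_H)(D̃ V_H)ᴴ = I. -/
open Matrix

private lemma submatrix_row_mul' {m m' k p : Type*} [Fintype k]
    (A : Matrix m k ℂ) (B : Matrix k p ℂ) (f : m' → m) :
    A.submatrix f id * B = (A * B).submatrix f id := by
  ext i j; simp [Matrix.mul_apply]

private lemma mul_submatrix_col' {m k p p' : Type*} [Fintype k]
    (A : Matrix m k ℂ) (B : Matrix k p ℂ) (g : p' → p) :
    A * B.submatrix id g = (A * B).submatrix id g := by
  ext i j; simp [Matrix.mul_apply]

private lemma submatrix_mul_submatrix' {m m' k p p' : Type*} [Fintype k]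
    (A : Matrix m k ℂ) (B : Matrix k p ℂ) (f : m' → m) (g : p' → p) :
    A.submatrix f id * B.submatrix id g = (A * B).submatrix f g := by
  ext i j; simp [Matrix.mul_apply]

private lemma split_mul' {n : ℕ} (A B : Matrix (Fin n) (Fin n ⊕ Fin n) ℂ) :
    A * Bᴴ = A.submatrix id Sum.inl * (B.submatrix id Sum.inl)ᴴ +
      A.submatrix id Sum.inr * (B.submatrix id Sum.inr)ᴴ := by
  ext i j
  simp [Matrix.mul_apply, Fintype.sum_sum_type, Finset.sum_add_distrib]

/-- The black harmonic aliasing pattern `Vᴴ Ũ D̃ W = Ñ` is equivalent to the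
biorthogonality relations between the down-sampled eigenvector blocks:
`(D̃V_L)ᴴ(D̃W_L) = (1/2)I`, `(D̃V_L)ᴴ(D̃W_H) = −(1/2)I`,
`(D̃V_H)ᴴ(D̃W_L) = −(1/2)I`, `(D̃V_H)ᴴ(D̃W_H) = (1/2)I`, and moreover
`(D̃W)(D̃V)ᴴ = (D̃W_L)(D̃V_L)ᴴ + (D̃W_H)(D̃V_H)ᴴ = I`. -/
theorem black_pattern_biorthogonal_relations {n : ℕ}
    (Dr Db : Matrix (Fin n) (Fin n ⊕ Fin n) ℂ)
    (hpart : IsRBPartition Dr Db)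
    (W V M : Matrix (Fin n ⊕ Fin n) (Fin n ⊕ Fin n) ℂ)
    (e : Fin n ⊕ Fin n → ℂ)
    (hbi : Vᴴ * W = 1)
    (hM : M = W * Matrix.diagonal e * Vᴴ)
    (hblack : Vᴴ * (Dbᵀ * Db) * W = Ntil n) :
    (Db * V.submatrix id Sum.inl)ᴴ * (Db * W.submatrix id Sum.inl) = (1 / 2 : ℂ) • 1 ∧
    (Db * V.submatrix id Sum.inl)ᴴ * (Db * W.submatrix id Sum.inr) = -((1 / 2 : ℂ) • 1) ∧
    (Db * V.submatrix id Sum.inr)ᴴ * (Db * W.submatrix id Sum.inl) = -((1 / 2 : ℂ) • 1) ∧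
    (Db * V.submatrix id Sum.inr)ᴴ * (Db * W.submatrix id Sum.inr) = (1 / 2 : ℂ) • 1 ∧
    (Db * W) * (Db * V)ᴴ =
      (Db * W.submatrix id Sum.inl) * (Db * V.submatrix id Sum.inl)ᴴ +
        (Db * W.submatrix id Sum.inr) * (Db * V.submatrix id Sum.inr)ᴴ ∧
    (Db * W) * (Db * V)ᴴ = 1 := by
  obtain ⟨-, hDb01, -, hDbDb, -, -, -⟩ := hpart
  have hDbH : Dbᴴ = Dbᵀ := by
    ext i j
    rcases hDb01 j i with h | h <;> simp [Matrix.conjTranspose_apply, h]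
  have step : ∀ f g : Fin n → (Fin n ⊕ Fin n),
      (Db * V.submatrix id f)ᴴ * (Db * W.submatrix id g) = (Ntil n).submatrix f g := by
    intro f g
    rw [Matrix.conjTranspose_mul, hDbH, Matrix.conjTranspose_submatrix,
      mul_submatrix_col' Db W g, Matrix.mul_assoc, mul_submatrix_col' Dbᵀ (Db * W) g,
      submatrix_mul_submatrix', ← Matrix.mul_assoc Dbᵀ Db W, ← Matrix.mul_assoc, hblack]
  have h11 : (Ntil n).submatrix (Sum.inl : Fin n → _) Sum.inl = (1 / 2 : ℂ) • 1 := by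
    ext i j; simp [Ntil]
  have h22 : (Ntil n).submatrix (Sum.inr : Fin n → _) Sum.inr = (1 / 2 : ℂ) • 1 := by
    ext i j; simp [Ntil]
  have h12 : (Ntil n).submatrix (Sum.inl : Fin n → _) Sum.inr = -((1 / 2 : ℂ) • 1) := by
    ext i j; simp [Ntil]
  have h21 : (Ntil n).submatrix (Sum.inr : Fin n → _) Sum.inl = -((1 / 2 : ℂ) • 1) := by
    ext i j; simp [Ntil]
  have hWV : W * Vᴴ = 1 := mul_eq_one_comm.mp hbi
  have hlast : (Db * W) * (Db * V)ᴴ = 1 := by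
    rw [Matrix.conjTranspose_mul, hDbH, Matrix.mul_assoc, ← Matrix.mul_assoc W, hWV,
      Matrix.one_mul, hDbDb]
  refine ⟨by rw [step, h11], by rw [step, h12], by rw [step, h21], by rw [step, h22], ?_, hlast⟩
  rw [split_mul' (Db * W) (Db * V)]
  simp only [mul_submatrix_col']
end
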